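/- arXiv:2204.12082 — 10 statements merged into one kernel-verified Lean document; each statement's English description precedes it below -/
import Mathlib

section
/- Let r ≥ 1 be an integer and let z be a nonzero complex number. Then there exists exactly one r-th root of unity ω such that the principal argument of z·ω⁻¹ lies in the half-open interval (−π/r, π/r]; moreover, this ω satisfies |z − ω| ≤ |z − ω'| for every r-th root of unity ω'. (In other words, every nonzero complex number is related to exactly one r-th root of unity, where relatedness means ω minimizes the distance |z − ω'| over all r-th roots of unity ω', with ties broken toward the root of smaller argument.) -/
open Complex

private lemma arg_abs_mul_exp {a : ℝ} (ha : 0 < a) {ψ : ℝ}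
    (hψ : ψ ∈ Set.Ioc (-Real.pi) Real.pi) :
    ((a : ℂ) * Complex.exp (ψ * I)).arg = ψ := by
  rw [Complex.exp_mul_I]
  exact Complex.arg_mul_cos_add_sin_mul_I ha hψ

private lemma root_ne_zero {ω : ℂ} {r : ℕ} (hr : 1 ≤ r) (h : ω ^ r = 1) : ω ≠ 0 := by
  intro h0; rw [h0, zero_pow (by omega)] at h; exact one_ne_zero h.symm

private lemma root_abs_one {ω : ℂ} {r : ℕ} (hr : 1 ≤ r) (h : ω ^ r = 1) :
    ‖ω‖ = 1 :=
  Complex.norm_eq_one_of_pow_eq_one h (by omega)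

/-- uniqueness core -/
private lemma uniq_core (r : ℕ) (hr : 1 ≤ r) (z : ℂ) (hz : z ≠ 0)
    {ω₁ ω₂ : ℂ} (h1 : ω₁ ^ r = 1) (h2 : ω₂ ^ r = 1)
    (ha1 : (z * ω₁⁻¹).arg ∈ Set.Ioc (-(Real.pi / r)) (Real.pi / r))
    (ha2 : (z * ω₂⁻¹).arg ∈ Set.Ioc (-(Real.pi / r)) (Real.pi / r)) : ω₁ = ω₂ := by
  have hω1 := root_ne_zero hr h1
  have hω2 := root_ne_zero hr h2
  set w₁ := z * ω₁⁻¹ with hw1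
  set w₂ := z * ω₂⁻¹ with hw2
  have hw1ne : w₁ ≠ 0 := mul_ne_zero hz (inv_ne_zero hω1)
  have hw2ne : w₂ ≠ 0 := mul_ne_zero hz (inv_ne_zero hω2)
  set a₁ := w₁.arg
  set a₂ := w₂.arg
  have habs1 : ‖w₁‖ = ‖z‖ := by
    rw [hw1, norm_mul, norm_inv, root_abs_one hr h1]; simp
  have habs2 : ‖w₂‖ = ‖z‖ := by
    rw [hw2, norm_mul, norm_inv, root_abs_one hr h2]; simp
  have key : ω₁ * ω₂⁻¹ = w₂ * w₁⁻¹ := by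
    field_simp [hw1, hw2]
    rw [hw1, hw2]; field_simp
  have hrpos : (0:ℝ) < r := by positivity
  have hpi := Real.pi_pos
  have hw1e := Complex.norm_mul_exp_arg_mul_I w₁
  have hw2e := Complex.norm_mul_exp_arg_mul_I w₂
  have hzabs : ((‖z‖ : ℝ) : ℂ) ≠ 0 := by
    simpa using hz
  have hexp : w₂ * w₁⁻¹ = Complex.exp (((a₂ - a₁ : ℝ)) * I) := by
    have e1 : Complex.exp (((a₂ - a₁ : ℝ)) * I)
        = Complex.exp ((a₂:ℝ) * I) * (Complex.exp ((a₁:ℝ) * I))⁻¹ := by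
      rw [← Complex.exp_neg, ← Complex.exp_add]
      congr 1
      push_cast
      ring
    rw [e1, ← hw1e, ← hw2e, habs1, habs2, mul_inv]
    field_simp [Complex.exp_ne_zero]
    rw [show a₁ = w₁.arg from rfl, show a₂ = w₂.arg from rfl]; ring
  have hpow : (ω₁ * ω₂⁻¹) ^ r = 1 := by
    rw [mul_pow, h1, inv_pow, h2, one_mul, inv_one]
  rw [key, hexp, ← Complex.exp_nat_mul] at hpow
  obtain ⟨n, hn⟩ := Complex.exp_eq_one_iff.mp hpow
  have hnr : (r : ℝ) * (a₂ - a₁) = n * (2 * Real.pi) := by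
    have := congrArg Complex.im hn
    simpa using this
  have hd1 : |a₂ - a₁| < 2 * Real.pi / r := by
    obtain ⟨l1, l2⟩ := ha1
    obtain ⟨l3, l4⟩ := ha2
    have h2 : 2 * Real.pi / (r:ℝ) = Real.pi / r + Real.pi / r := by ring
    rw [abs_lt, h2]
    constructor <;> linarith
  have hn0 : n = 0 := by
    by_contra hne
    have h1n : (1:ℝ) ≤ |(n:ℝ)| := by
      have : (1:ℤ) ≤ |n| := Int.one_le_abs hne
      calc (1:ℝ) ≤ ((|n| : ℤ) : ℝ) := by exact_mod_cast this
        _ = |(n:ℝ)| := by push_cast; rfl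
    have habs_eq : |(r:ℝ) * (a₂ - a₁)| = |(n:ℝ)| * (2 * Real.pi) := by
      rw [hnr, abs_mul]
      congr 1
      exact abs_of_pos (by positivity)
    rw [abs_mul, abs_of_pos hrpos] at habs_eq
    have hlt : (r:ℝ) * |a₂ - a₁| < 2 * Real.pi := by
      calc (r:ℝ) * |a₂ - a₁| < r * (2 * Real.pi / r) :=
            mul_lt_mul_of_pos_left hd1 hrpos
        _ = 2 * Real.pi := by field_simp
    nlinarith
  have hd0 : a₂ = a₁ := by
    rw [hn0] at hnr
    push_cast at hnr
    have hz0 : (r:ℝ) * (a₂ - a₁) = 0 := by linarith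
    rcases mul_eq_zero.mp hz0 with h | h
    · exact absurd h (ne_of_gt hrpos)
    · linarith
  have hww : w₁ = w₂ := Complex.ext_norm_arg (by rw [habs1, habs2]) hd0.symm
  have : ω₁⁻¹ = ω₂⁻¹ := mul_left_cancel₀ hz (by rw [← hw1, ← hw2, hww])
  exact inv_injective this

/-- distance formula -/
private lemma dist_formula (z : ℂ) (hz : z ≠ 0) {ω : ℂ} (hω : ‖ω‖ = 1)
    (hω0 : ω ≠ 0) :
    ‖z - ω‖ ^ 2
      = ‖z‖ ^ 2 + 1 - 2 * ‖z‖ * Real.cos ((z * ω⁻¹).arg) := by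
  set w := z * ω⁻¹ with hw
  have hwne : w ≠ 0 := mul_ne_zero hz (inv_ne_zero hω0)
  have habsw : ‖w‖ = ‖z‖ := by
    rw [hw, norm_mul, norm_inv, hω]; simp
  have hfac : z - ω = ω * (w - 1) := by
    rw [hw]; field_simp
  rw [hfac, norm_mul, hω, one_mul, Complex.sq_norm, Complex.normSq_sub]
  have hre : w.re = ‖z‖ * Real.cos w.arg := by
    rw [Complex.cos_arg hwne, habsw]
    field_simp [norm_ne_zero_iff.mpr hz]
  rw [Complex.normSq_eq_norm_sq, habsw]
  simp [hre]
  ring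

/-- For an integer `r ≥ 1` and a nonzero complex number `z`, there is
exactly one `r`-th root of unity `ω` with `arg (z·ω⁻¹) ∈ (−π/r, π/r]`; moreover any such
`ω` minimizes `|z − ω'|` over all `r`-th roots of unity `ω'`. -/
theorem related_root_existsUnique_and_minimizes (r : ℕ) (hr : 1 ≤ r) (z : ℂ) (hz : z ≠ 0) :
    (∃! ω : ℂ, ω ^ r = 1 ∧
      (z * ω⁻¹).arg ∈ Set.Ioc (-(Real.pi / r)) (Real.pi / r)) ∧
    ∀ ω : ℂ, (ω ^ r = 1 ∧ (z * ω⁻¹).arg ∈ Set.Ioc (-(Real.pi / r)) (Real.pi / r)) →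
      ∀ ω' : ℂ, ω' ^ r = 1 → ‖z - ω‖ ≤ ‖z - ω'‖ := by
  have hpi := Real.pi_pos
  have hrpos : (0:ℝ) < r := by positivity
  have hrne : (r:ℝ) ≠ 0 := ne_of_gt hrpos
  have hr1 : (1:ℝ) ≤ r := by exact_mod_cast hr
  set θ := z.arg with hθ
  have hθmem := Complex.arg_mem_Ioc z
  set k : ℤ := ⌈(r:ℝ) * θ / (2 * Real.pi) - 1/2⌉ with hk
  have hk1 : (r:ℝ) * θ / (2 * Real.pi) - 1/2 ≤ k := Int.le_ceil _
  have hk2 : (k:ℝ) < (r:ℝ) * θ / (2 * Real.pi) - 1/2 + 1 := Int.ceil_lt_add_one _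
  have h2pi : 2 * Real.pi * ((r:ℝ) * θ / (2 * Real.pi)) = (r:ℝ) * θ := by
    field_simp
  have key1 : (r:ℝ) * θ - Real.pi ≤ 2 * Real.pi * k := by
    have := mul_le_mul_of_nonneg_left hk1 (le_of_lt (by positivity : (0:ℝ) < 2 * Real.pi))
    rw [mul_sub, h2pi] at this
    linarith
  have key2 : 2 * Real.pi * (k:ℝ) < (r:ℝ) * θ + Real.pi := by
    have := mul_lt_mul_of_pos_left hk2 (by positivity : (0:ℝ) < 2 * Real.pi)
    rw [mul_add, mul_sub, h2pi] at this
    linarith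
  set φ : ℝ := 2 * Real.pi * k / r with hφ
  set ψ : ℝ := θ - φ with hψdef
  have hφr : φ * r = 2 * Real.pi * k := by
    rw [hφ]; field_simp
  have hub : ψ ≤ Real.pi / r := by
    rw [hψdef, le_div_iff₀ hrpos]
    nlinarith [hφr, key1]
  have hlb : -(Real.pi / r) < ψ := by
    rw [hψdef, neg_lt, neg_sub, lt_div_iff₀ hrpos]
    nlinarith [hφr, key2]
  have hpir : Real.pi / r ≤ Real.pi := by
    rw [div_le_iff₀ hrpos]; nlinarith
  have hpiIoc : ψ ∈ Set.Ioc (-Real.pi) Real.pi := ⟨by linarith, by linarith⟩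
  set ω₀ : ℂ := Complex.exp ((φ:ℝ) * I) with hω₀
  have hω₀pow : ω₀ ^ r = 1 := by
    rw [hω₀, ← Complex.exp_nat_mul]
    have hc : (r:ℂ) * ((φ:ℝ) * I) = (k:ℂ) * (2 * (Real.pi:ℂ) * I) := by
      have hcc : ((φ * r : ℝ) : ℂ) = ((2 * Real.pi * k : ℝ) : ℂ) := by exact congrArg Complex.ofReal hφr
      push_cast at hcc ⊢
      linear_combination I * hcc
    rw [hc]
    exact_mod_cast Complex.exp_int_mul_two_pi_mul_I k
  have hω₀ne : ω₀ ≠ 0 := Complex.exp_ne_zero _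
  have hze := Complex.norm_mul_exp_arg_mul_I z
  rw [← hθ] at hze
  have hargω₀ : (z * ω₀⁻¹).arg = ψ := by
    have e1 : Complex.exp ((ψ:ℝ) * I)
        = Complex.exp ((θ:ℝ) * I) * (Complex.exp ((φ:ℝ) * I))⁻¹ := by
      rw [← Complex.exp_neg, ← Complex.exp_add]
      congr 1
      rw [hψdef]
      push_cast
      ring
    have e2 : z * ω₀⁻¹ = ((‖z‖ : ℝ) : ℂ) * Complex.exp ((ψ:ℝ) * I) := by
      conv_lhs => rw [← hze]
      rw [e1, hω₀]
      ring
    rw [e2]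
    exact arg_abs_mul_exp (norm_pos_iff.mpr hz) hpiIoc
  have hmem₀ : (z * ω₀⁻¹).arg ∈ Set.Ioc (-(Real.pi / r)) (Real.pi / r) := by
    rw [hargω₀]; exact ⟨hlb, hub⟩
  refine ⟨⟨ω₀, ⟨hω₀pow, hmem₀⟩, fun ω' hh => uniq_core r hr z hz hh.1 hω₀pow hh.2 hmem₀⟩, ?_⟩
  -- minimization
  rintro ω ⟨hωpow, hωmem⟩ ω' hω'pow
  have hωne := root_ne_zero hr hωpow
  have hω'ne := root_ne_zero hr hω'pow
  have hωabs := root_abs_one hr hωpow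
  have hω'abs := root_abs_one hr hω'pow
  set a := (z * ω⁻¹).arg with ha
  set a' := (z * ω'⁻¹).arg with ha'
  have hd := dist_formula z hz hωabs hωne
  have hd' := dist_formula z hz hω'abs hω'ne
  by_cases hcase : a' ∈ Set.Ioc (-(Real.pi / r)) (Real.pi / r)
  · have : ω = ω' := uniq_core r hr z hz hωpow hω'pow hωmem hcase
    rw [this]
  · have ha'mem := Complex.arg_mem_Ioc (z * ω'⁻¹)
    have hpirpos : (0:ℝ) < Real.pi / r := by positivity
    have habs_a : |a| ≤ Real.pi / r := by
      rw [abs_le]; exact ⟨le_of_lt hωmem.1, hωmem.2⟩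
    have habs_a' : Real.pi / r ≤ |a'| := by
      rw [Set.mem_Ioc, not_and_or, not_lt, not_le] at hcase
      rcases hcase with h | h
      · rw [abs_of_nonpos (by linarith)]
        linarith
      · rw [abs_of_pos (lt_trans hpirpos h)]
        linarith
    have habs_a'pi : |a'| ≤ Real.pi := by
      rw [abs_le]; exact ⟨le_of_lt ha'mem.1, ha'mem.2⟩
    have hcos : Real.cos a' ≤ Real.cos a := by
      rw [← Real.cos_abs a, ← Real.cos_abs a']
      exact Real.cos_le_cos_of_nonneg_of_le_pi (abs_nonneg a) habs_a'pi
        (le_trans habs_a habs_a')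
    have hzpos : 0 < ‖z‖ := norm_pos_iff.mpr hz
    have hsq : ‖z - ω‖ ^ 2 ≤ ‖z - ω'‖ ^ 2 := by
      rw [hd, hd']
      nlinarith
    exact (pow_le_pow_iff_left₀ (norm_nonneg _) (norm_nonneg _)
      two_ne_zero).mp hsq
end

section
/- Let r ≥ 1 be an integer and let u, v be nonzero complex numbers such that μ := (v/u)^r is a negative real number. If ω is an r-th root of unity related to the pair (u,v), then u/v = |μ|^{-1/r}·e^{iπ/r}·ω, i.e., u/v = |u/v|·e^{iπ/r}·ω. -/
open Complex

/-- Let `r ≥ 1` and let `u, v` be nonzero complex numbers such that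
`μ := (v/u)^r` is a negative real number. If `ω` is an `r`-th root of unity related to the
pair `(u,v)` (i.e. `arg((u/v)·ω⁻¹) ∈ (−π/r, π/r]`), then `u/v = |μ|^{-1/r}·e^{iπ/r}·ω`,
i.e. `u/v = |u/v|·e^{iπ/r}·ω`. -/
theorem rel_root_mu_neg (r : ℕ) (hr : 1 ≤ r) (u v : ℂ) (hu : u ≠ 0) (hv : v ≠ 0)
    (μ : ℂ) (hμ : μ = (v / u) ^ r) (hμneg : ∃ m : ℝ, m < 0 ∧ (m : ℂ) = μ)
    (ω : ℂ) (hω : ω ^ r = 1)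
    (hrel : (u / v * ω⁻¹).arg ∈ Set.Ioc (-(Real.pi / r)) (Real.pi / r)) :
    u / v = ((‖μ‖ ^ (-(1 / (r : ℝ))) : ℝ) : ℂ) *
        Complex.exp ((Real.pi : ℂ) * Complex.I / r) * ω ∧
    u / v = ((‖u / v‖ : ℝ) : ℂ) *
        Complex.exp ((Real.pi : ℂ) * Complex.I / r) * ω := by
  obtain ⟨m, hm, hmμ⟩ := hμneg
  have hrpos : (0:ℝ) < r := by exact_mod_cast hr
  have hω0 : ω ≠ 0 := by
    intro h; rw [h, zero_pow (by omega)] at hω; exact one_ne_zero hω.symm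
  have habsω : ‖ω‖ = 1 := by
    have h1 : (‖ω‖) ^ r = 1 := by rw [← norm_pow, hω, norm_one]
    have := pow_eq_one_iff_cases.mp h1
    rcases this with h | h | h
    · omega
    · exact h
    · have hnn := norm_nonneg ω
      rw [h.1] at hnn
      linarith
  set z := u / v * ω⁻¹ with hz
  have huv : u / v ≠ 0 := div_ne_zero hu hv
  have hz0 : z ≠ 0 := mul_ne_zero huv (inv_ne_zero hω0)
  have hzr : z ^ r = ((m⁻¹ : ℝ) : ℂ) := by
    have h1 : z ^ r = (u / v) ^ r := by
      rw [hz, mul_pow, inv_pow, hω, inv_one, mul_one]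
    have h2 : (u / v) ^ r = μ⁻¹ := by
      rw [hμ, ← inv_pow, inv_div]
    rw [h1, h2, ← hmμ, Complex.ofReal_inv]
  have habsz : ‖z‖ = ‖u / v‖ := by
    rw [hz, norm_mul, norm_inv, habsω, inv_one, mul_one]
  have habszr : (‖z‖) ^ r = (-m)⁻¹ := by
    have := congrArg (‖·‖) hzr
    rw [norm_pow] at this
    rw [this, Complex.norm_real, Real.norm_eq_abs, abs_of_neg (inv_neg''.mpr hm)]
    rw [← neg_inv]
  -- exp(r * arg z * I) = -1
  have hzeq := Complex.norm_mul_exp_arg_mul_I z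
  have hexp : Complex.exp ((r : ℂ) * (z.arg : ℂ) * Complex.I) = -1 := by
    have h1 : ((‖z‖ : ℂ)) ^ r * Complex.exp ((r : ℂ) * (z.arg : ℂ) * Complex.I)
        = ((m⁻¹ : ℝ) : ℂ) := by
      rw [mul_assoc, Complex.exp_nat_mul, ← mul_pow, hzeq, hzr]
    have h2 : ((‖z‖ : ℂ)) ^ r = (((-m)⁻¹ : ℝ) : ℂ) := by
      rw [← Complex.ofReal_pow, habszr]
    rw [h2] at h1
    have hmne : ((( -m)⁻¹ : ℝ) : ℂ) ≠ 0 := by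
      simp only [ne_eq, Complex.ofReal_eq_zero, inv_eq_zero, neg_eq_zero]
      linarith
    have hreal : (m⁻¹ : ℝ) = (-m)⁻¹ * (-1) := by
      field_simp
    have h1' : ((( -m)⁻¹ : ℝ) : ℂ) * Complex.exp ((r : ℂ) * (z.arg : ℂ) * Complex.I)
        = ((( -m)⁻¹ : ℝ) : ℂ) * (-1) := by
      rw [h1, hreal]
      push_cast
      ring
    exact mul_left_cancel₀ hmne h1'
  have hargz : z.arg = Real.pi / r := by
    rw [show (-1 : ℂ) = Complex.exp (Real.pi * Complex.I) from (Complex.exp_pi_mul_I).symm]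
      at hexp
    obtain ⟨n, hn⟩ := Complex.exp_eq_exp_iff_exists_int.mp hexp
    have hI : ((r * z.arg : ℝ) : ℂ) * Complex.I
        = ((Real.pi + n * (2 * Real.pi) : ℝ) : ℂ) * Complex.I := by
      push_cast
      linear_combination hn
    have hre : (r : ℝ) * z.arg = Real.pi + n * (2 * Real.pi) := by
      have := mul_right_cancel₀ Complex.I_ne_zero hI
      exact_mod_cast this
    obtain ⟨hlo, hhi⟩ := hrel
    have hpi := Real.pi_pos
    have hlo' : -Real.pi < (r:ℝ) * z.arg := by
      have : -(Real.pi / r) * r < z.arg * r := by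
        exact mul_lt_mul_of_pos_right hlo hrpos
      calc -Real.pi = -(Real.pi / r) * r := by field_simp
        _ < z.arg * r := this
        _ = (r:ℝ) * z.arg := by ring
    have hhi' : (r:ℝ) * z.arg ≤ Real.pi := by
      have : z.arg * r ≤ (Real.pi / r) * r := mul_le_mul_of_nonneg_right hhi (le_of_lt hrpos)
      calc (r:ℝ) * z.arg = z.arg * r := by ring
        _ ≤ (Real.pi / r) * r := this
        _ = Real.pi := by field_simp
    have hn0 : n = 0 := by
      have h1 : (-1 : ℝ) < n := by nlinarith
      have h2 : (n : ℝ) ≤ 0 := by nlinarith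
      have h1' : (-1 : ℤ) < n := by exact_mod_cast h1
      have h2' : n ≤ (0 : ℤ) := by exact_mod_cast h2
      omega
    rw [hn0] at hre
    have : (r:ℝ) * z.arg = Real.pi := by simpa using hre
    field_simp
    linarith [this]
  -- conclude
  have hzval : z = ((‖u/v‖ : ℝ) : ℂ) * Complex.exp (Real.pi * Complex.I / r) := by
    rw [← hzeq, habsz, hargz]
    congr 1
    push_cast
    ring_nf
  have h2 : u / v = ((‖u / v‖ : ℝ) : ℂ) *
      Complex.exp ((Real.pi : ℂ) * Complex.I / r) * ω := by
    have huvz : u / v = z * ω := by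
      rw [hz, mul_assoc, inv_mul_cancel₀ hω0, mul_one]
    conv_lhs => rw [huvz, hzval]
  have habsμ : ‖μ‖ = -m := by
    rw [← hmμ, Complex.norm_real, Real.norm_eq_abs, abs_of_neg hm]
  have hkey : (‖μ‖ ^ (-(1 / (r : ℝ))) : ℝ) = ‖u / v‖ := by
    have hmpos : (0:ℝ) < -m := by linarith
    have habspos : (0:ℝ) < ‖u / v‖ := by
      exact norm_pos_iff.mpr huv
    have h1 : ‖u / v‖ ^ (r : ℝ) = (-m)⁻¹ := by
      rw [Real.rpow_natCast, ← habsz, habszr]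
    have h2' : ‖u / v‖ = ((-m)⁻¹) ^ (1 / (r : ℝ)) := by
      rw [← h1, ← Real.rpow_mul habspos.le, mul_one_div, div_self hrpos.ne',
        Real.rpow_one]
    rw [habsμ, h2', Real.rpow_neg hmpos.le, Real.inv_rpow hmpos.le]
  exact ⟨by rw [hkey]; exact h2, h2⟩
end

section
/- Let r ≥ 3 be an integer and let u, v be nonzero complex numbers with |u| = |v|. Let ω be the r-th root of unity related to the pair (u,v), let Z = max(|u|,|v|) and ζ = |u^r − v^r|/Z^r. Then |u/v − ω| ≤ (π/(2r))·ζ; in particular |u/v − ω| ≤ ζ = (Z/|v|)·ζ. -/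
open Complex

lemma abs_exp_mul_I_sub_one' (θ : ℝ) :
    ‖Complex.exp (θ * Complex.I) - 1‖ = 2 * |Real.sin (θ / 2)| := by
  rw [Real.abs_sin_half, Complex.norm_def, Complex.normSq_apply]
  have hre : (Complex.exp (θ * Complex.I) - 1).re = Real.cos θ - 1 := by
    simp [Complex.exp_ofReal_mul_I_re]
  have him : (Complex.exp (θ * Complex.I) - 1).im = Real.sin θ := by
    simp [Complex.exp_ofReal_mul_I_im]
  rw [hre, him]
  have hpyth : Real.sin θ ^ 2 + Real.cos θ ^ 2 = 1 := Real.sin_sq_add_cos_sq θ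
  have : (Real.cos θ - 1) * (Real.cos θ - 1) + Real.sin θ * Real.sin θ
      = 2 ^ 2 * ((1 - Real.cos θ) / 2) := by nlinarith
  rw [this, Real.sqrt_mul (by positivity), Real.sqrt_sq (by norm_num)]

/-- Let `r ≥ 3` and let `u, v` be nonzero complex numbers with
`|u| = |v|`. Let `ω` be the `r`-th root of unity related to `(u,v)`, let
`Z = max(|u|,|v|)` and `ζ = |u^r − v^r|/Z^r`. Then `|u/v − ω| ≤ (π/(2r))·ζ`;
in particular `|u/v − ω| ≤ ζ = (Z/|v|)·ζ`. -/
theorem rel_root_close_abs_eq (r : ℕ) (hr : 3 ≤ r) (u v : ℂ) (hu : u ≠ 0) (hv : v ≠ 0)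
    (habs : ‖u‖ = ‖v‖)
    (ω : ℂ) (hω : ω ^ r = 1)
    (hrel : (u / v * ω⁻¹).arg ∈ Set.Ioc (-(Real.pi / r)) (Real.pi / r))
    (Z ζ : ℝ) (hZ : Z = max ‖u‖ ‖v‖)
    (hζ : ζ = ‖u ^ r - v ^ r‖ / Z ^ r) :
    ‖u / v - ω‖ ≤ Real.pi / (2 * r) * ζ ∧
    ‖u / v - ω‖ ≤ ζ ∧ ζ = Z / ‖v‖ * ζ := by
  have hr0 : r ≠ 0 := by omega
  have hrpos : (0:ℝ) < r := by positivity
  have hπ := Real.pi_pos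
  have hωabs : ‖ω‖ = 1 := Complex.norm_eq_one_of_pow_eq_one hω hr0
  have hω0 : ω ≠ 0 := by
    intro h; rw [h, zero_pow hr0] at hω; exact zero_ne_one hω
  set w : ℂ := u / v * ω⁻¹ with hw_def
  set θ : ℝ := w.arg with hθ_def
  have hvabs : (0:ℝ) < ‖v‖ := norm_pos_iff.mpr hv
  have habsw : ‖w‖ = 1 := by
    rw [hw_def, norm_mul, norm_div, habs, norm_inv, hωabs]
    field_simp
  have hw : w = Complex.exp (θ * Complex.I) := by
    have := Complex.norm_mul_exp_arg_mul_I w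
    rw [habsw] at this
    simpa using this.symm
  -- |θ| ≤ π / r
  have hθle : |θ| ≤ Real.pi / r := by
    rcases hrel with ⟨h1, h2⟩
    rw [abs_le]; constructor <;> [linarith; linarith]
  -- first abs
  have key1 : ‖u / v - ω‖ = 2 * |Real.sin (θ / 2)| := by
    have : u / v - ω = ω * (w - 1) := by
      rw [hw_def]; field_simp
    rw [this, norm_mul, hωabs, one_mul, hw, abs_exp_mul_I_sub_one']
  -- Z = |v|
  have hZv : Z = ‖v‖ := by rw [hZ, habs, max_self]
  have hZpos : (0:ℝ) < Z := by rw [hZv]; exact hvabs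
  -- ζ = 2 |sin (rθ/2)|
  have keyζ : ζ = 2 * |Real.sin (r * θ / 2)| := by
    have h1 : u ^ r - v ^ r = v ^ r * ((u / v) ^ r - 1) := by
      rw [div_pow, mul_sub, mul_div_cancel₀ _ (pow_ne_zero _ hv), mul_one]
    have h2 : (u / v) ^ r = Complex.exp ((r * θ : ℝ) * Complex.I) := by
      have huvw : u / v = w * ω := by rw [hw_def]; field_simp
      rw [huvw, mul_pow, hω, mul_one, hw, ← Complex.exp_nat_mul]
      push_cast; ring_nf
    rw [hζ, h1, norm_mul, norm_pow, h2, abs_exp_mul_I_sub_one', hZv]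
    field_simp
  have hζ0 : 0 ≤ ζ := by rw [keyζ]; positivity
  -- main inequality
  have main : ‖u / v - ω‖ ≤ Real.pi / (2 * r) * ζ := by
    rw [key1, keyζ]
    have h1 : 2 * |Real.sin (θ / 2)| ≤ |θ| := by
      have := Real.abs_sin_le_abs (x := θ / 2)
      rw [abs_div] at this
      simp only [_root_.abs_two] at this
      linarith [this]
    have h2 : r * |θ| / 2 ≤ Real.pi / 2 := by
      have : r * |θ| ≤ r * (Real.pi / r) := by
        exact mul_le_mul_of_nonneg_left hθle (le_of_lt hrpos)
      rw [mul_div_cancel₀ _ (ne_of_gt hrpos)] at this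
      linarith
    have hjordan : 2 / Real.pi * (r * |θ| / 2) ≤ Real.sin (r * |θ| / 2) :=
      Real.mul_le_sin (by positivity) h2
    have h3 : Real.sin (r * |θ| / 2) ≤ |Real.sin (r * θ / 2)| := by
      rcases abs_cases θ with ⟨h, _⟩ | ⟨h, _⟩
      · rw [h]; exact le_abs_self _
      · rw [h]
        have : r * -θ / 2 = -(r * θ / 2) := by ring
        rw [this, Real.sin_neg]
        exact neg_le_abs _
    have h4 : r / Real.pi * |θ| ≤ |Real.sin (r * θ / 2)| := by
      calc r / Real.pi * |θ| = 2 / Real.pi * (r * |θ| / 2) := by ring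
        _ ≤ Real.sin (r * |θ| / 2) := hjordan
        _ ≤ |Real.sin (r * θ / 2)| := h3
    calc 2 * |Real.sin (θ / 2)| ≤ |θ| := h1
      _ = Real.pi / (2 * r) * (2 * (r / Real.pi * |θ|)) := by
          field_simp
      _ ≤ Real.pi / (2 * r) * (2 * |Real.sin (r * θ / 2)|) := by
          apply mul_le_mul_of_nonneg_left _ (by positivity)
          linarith
  refine ⟨main, ?_, ?_⟩
  · have hcoef : Real.pi / (2 * r) ≤ 1 := by
      rw [div_le_one (by positivity)]
      have h6 : (6:ℝ) ≤ 2 * r := by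
        have : (3:ℝ) ≤ r := by exact_mod_cast hr
        linarith
      linarith [Real.pi_le_four]
    calc ‖u / v - ω‖ ≤ Real.pi / (2 * r) * ζ := main
      _ ≤ 1 * ζ := mul_le_mul_of_nonneg_right hcoef hζ0
      _ = ζ := one_mul ζ
  · rw [hZv, div_self (ne_of_gt hvabs), one_mul]
end

section
/- Let r ≥ 1 be an integer and let u, v be nonzero complex numbers such that (v/u)^r is a positive real number. Let ω be the r-th root of unity related to the pair (u,v), let Z = max(|u|,|v|) and ζ = |u^r − v^r|/Z^r. Then |u/v − ω| ≤ (Z/|v|)·ζ. -/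
open Complex

lemma key_real_ineq (t : ℝ) (ht : 0 < t) (r : ℕ) (hr : 1 ≤ r) :
    |t - 1| * (max t 1) ^ r ≤ max t 1 * |t ^ r - 1| := by
  rcases le_total t 1 with h | h
  · rw [max_eq_right h, one_pow, one_mul, mul_one]
    have h1 : t ^ r ≤ t ^ 1 := pow_le_pow_of_le_one ht.le h hr
    rw [pow_one] at h1
    have h2 : t ^ r ≤ 1 := pow_le_one₀ ht.le h
    rw [abs_sub_comm, _root_.abs_of_nonneg (by linarith : (0:ℝ) ≤ 1 - t), abs_sub_comm,
      _root_.abs_of_nonneg (by linarith : (0:ℝ) ≤ 1 - t ^ r)]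
    linarith
  · rw [max_eq_left h]
    have h1 : t ≤ t ^ r := le_self_pow₀ h (by omega)
    rw [_root_.abs_of_nonneg (by linarith : (0:ℝ) ≤ t - 1),
      _root_.abs_of_nonneg (by linarith : (0:ℝ) ≤ t ^ r - 1)]
    nlinarith

/-- Let `r ≥ 1` and let `u, v` be nonzero complex numbers such that
`(v/u)^r` is a positive real number. Let `ω` be the `r`-th root of unity related to
`(u,v)`, let `Z = max(|u|,|v|)` and `ζ = |u^r − v^r|/Z^r`. Then
`|u/v − ω| ≤ (Z/|v|)·ζ`. -/
theorem rel_root_close_mu_pos (r : ℕ) (hr : 1 ≤ r) (u v : ℂ) (hu : u ≠ 0) (hv : v ≠ 0)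
    (hμpos : ∃ m : ℝ, 0 < m ∧ (m : ℂ) = (v / u) ^ r)
    (ω : ℂ) (hω : ω ^ r = 1)
    (hrel : (u / v * ω⁻¹).arg ∈ Set.Ioc (-(Real.pi / r)) (Real.pi / r))
    (Z ζ : ℝ) (hZ : Z = max ‖u‖ ‖v‖)
    (hζ : ζ = ‖u ^ r - v ^ r‖ / Z ^ r) :
    ‖u / v - ω‖ ≤ Z / ‖v‖ * ζ := by
  obtain ⟨m, hm, hmr⟩ := hμpos
  have hr0 : (0:ℝ) < r := by exact_mod_cast hr
  have hω0 : ω ≠ 0 := by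
    intro h; rw [h, zero_pow (by omega)] at hω; exact one_ne_zero hω.symm
  have hωabs : ‖ω‖ = 1 :=
    Complex.norm_eq_one_of_pow_eq_one hω (by omega)
  set z : ℂ := u / v * ω⁻¹ with hzdef
  have hz0 : z ≠ 0 := by
    apply mul_ne_zero (div_ne_zero hu hv) (inv_ne_zero hω0)
  -- z^r = (u/v)^r = m⁻¹
  have hzr : z ^ r = ((m⁻¹ : ℝ) : ℂ) := by
    have h1 : ((v / u) ^ r : ℂ) = (m : ℂ) := hmr.symm
    have h2 : (u / v) ^ r = ((m : ℂ))⁻¹ := by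
      rw [← h1, ← inv_pow, inv_div]
    rw [hzdef, mul_pow, inv_pow, hω, inv_one, mul_one, h2]
    push_cast; ring
  -- arg z = 0
  have habsz : (‖z‖) ^ r = m⁻¹ := by
    have := congrArg (‖·‖) hzr
    rwa [norm_pow, Complex.norm_real, Real.norm_eq_abs, abs_of_pos (by positivity)] at this
  have hexp : Complex.exp ((r : ℂ) * (z.arg * I)) = 1 := by
    have hbase := Complex.norm_mul_exp_arg_mul_I z
    have hpow := congrArg (· ^ r) hbase
    simp only [mul_pow, ← Complex.exp_nat_mul] at hpow
    rw [hzr] at hpow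
    have habsC : ((‖z‖ : ℂ)) ^ r = ((m⁻¹ : ℝ) : ℂ) := by
      rw [← Complex.ofReal_pow, habsz]
    rw [habsC] at hpow
    have hm0 : ((m⁻¹ : ℝ) : ℂ) ≠ 0 :=
      Complex.ofReal_ne_zero.mpr (inv_pos.mpr hm).ne'
    exact mul_left_cancel₀ hm0 (hpow.trans (mul_one _).symm)
  obtain ⟨n, hn⟩ := Complex.exp_eq_one_iff.mp hexp
  have hnreal : (r : ℝ) * z.arg = n * (2 * Real.pi) := by
    have hI : (((r : ℝ) * z.arg : ℝ) : ℂ) * I = (((n : ℝ) * (2 * Real.pi) : ℝ) : ℂ) * I := by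
      push_cast
      linear_combination hn
    have h2 := mul_right_cancel₀ Complex.I_ne_zero hI
    exact_mod_cast h2
  have hargIoc : -(Real.pi) < (r:ℝ) * z.arg ∧ (r:ℝ) * z.arg ≤ Real.pi := by
    obtain ⟨h1, h2⟩ := hrel
    constructor
    · have := (mul_lt_mul_iff_right₀ hr0).mpr h1
      rw [mul_neg, mul_div_cancel₀ _ (ne_of_gt hr0)] at this
      linarith
    · have := (mul_le_mul_iff_right₀ hr0).mpr h2
      rwa [mul_div_cancel₀ _ (ne_of_gt hr0)] at this
  have hn0 : n = 0 := by
    have hpi := Real.pi_pos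
    rw [hnreal] at hargIoc
    obtain ⟨h1, h2⟩ := hargIoc
    have h3 : (-1:ℝ) < (n:ℝ) := by nlinarith
    have h4 : (n:ℝ) < 1 := by nlinarith
    have h3' : -1 < n := by exact_mod_cast h3
    have h4' : n < 1 := by exact_mod_cast h4
    omega
  have harg : z.arg = 0 := by
    have h : (r:ℝ) * z.arg = 0 := by rw [hnreal, hn0]; push_cast; ring
    rcases mul_eq_zero.mp h with h | h
    · exact absurd h hr0.ne'
    · exact h
  -- z is a positive real: z = abs z
  have hzreal : z = ((‖z‖ : ℝ) : ℂ) := by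
    have := Complex.norm_mul_exp_arg_mul_I z
    rw [harg] at this
    simpa using this.symm
  set t : ℝ := ‖z‖ with htdef
  have ht : 0 < t := norm_pos_iff.mpr hz0
  have huv : u / v = (t : ℂ) * ω := by
    have : z * ω = (t:ℂ) * ω := by rw [← hzreal]
    rwa [hzdef, mul_assoc, inv_mul_cancel₀ hω0, mul_one] at this
  have hu_eq : u = (t:ℂ) * ω * v := by
    rw [div_eq_iff hv] at huv
    rw [huv]
  -- abs values
  have habsu : ‖u‖ = t * ‖v‖ := by
    rw [hu_eq]; simp [hωabs, abs_of_pos ht]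
  -- LHS
  have hLHS : ‖u / v - ω‖ = |t - 1| := by
    rw [huv]
    have : (t:ℂ) * ω - ω = ((t:ℂ) - 1) * ω := by ring
    rw [this, norm_mul, hωabs, mul_one]
    rw [show (t:ℂ) - 1 = ((t - 1 : ℝ) : ℂ) by push_cast; ring, Complex.norm_real, Real.norm_eq_abs]
  -- u^r - v^r
  have hpow : ‖u ^ r - v ^ r‖ = |t ^ r - 1| * ‖v‖ ^ r := by
    rw [hu_eq]
    have : ((t:ℂ) * ω * v) ^ r - v ^ r = (((t ^ r : ℝ) : ℂ) - 1) * v ^ r := by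
      rw [mul_pow, mul_pow, hω, mul_one]; push_cast; ring
    rw [this, norm_mul, norm_pow]
    congr 1
    rw [show ((t ^ r : ℝ) : ℂ) - 1 = ((t ^ r - 1 : ℝ) : ℂ) by push_cast; ring,
      Complex.norm_real, Real.norm_eq_abs]
  -- Z
  have hvpos : 0 < ‖v‖ := norm_pos_iff.mpr hv
  have hZ' : Z = ‖v‖ * max t 1 := by
    rw [hZ, habsu]
    rcases le_total t 1 with h | h
    · rw [max_eq_right h, max_eq_right (by nlinarith), mul_one]
    · rw [max_eq_left h, max_eq_left (by nlinarith), mul_comm]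
  have hM : 0 < max t 1 := lt_max_of_lt_right one_pos
  rw [hLHS, hζ, hpow, hZ']
  have hexpand : ‖v‖ * max t 1 / ‖v‖ *
      (|t ^ r - 1| * ‖v‖ ^ r / (‖v‖ * max t 1) ^ r)
      = max t 1 * |t ^ r - 1| / (max t 1) ^ r := by
    rw [mul_pow]
    field_simp
  rw [hexpand, le_div_iff₀ (pow_pos hM r)]
  exact key_real_ineq t ht r hr
end

section
/- Let r ≥ 1 be an integer, let ω be an r-th root of unity, and let u', v', u, v be nonzero complex numbers such that (v'/u')^r and (v/u)^r are real, and ω is related both to the pair (u',v') and to the pair (u,v). Set Z' = max(|u'|,|v'|), Z = max(|u|,|v|), ζ' = |u'^r − v'^r|/Z'^r and ζ = |u^r − v^r|/Z^r. If ζ ≤ ζ' and ζ < 1, then |u'·v − u·v'| ≤ 2·Z'·Z·ζ'. -/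
open Complex


lemma key_real (r : ℕ) (hr : 1 ≤ r) (s s' : ℝ) (hs : 0 < s) (hs' : 0 < s')
    (h : |1 - s^r| / max 1 s ^ r ≤ |1 - s'^r| / max 1 s' ^ r) :
    |s - s'| ≤ 2 * max 1 s' * max 1 s * (|1 - s'^r| / max 1 s' ^ r) := by
  have hr0 : r ≠ 0 := by omega
  rcases le_total s 1 with h1 | h1 <;> rcases le_total s' 1 with h2 | h2
  · -- s ≤ 1, s' ≤ 1
    have e1 : s ^ r ≤ 1 := pow_le_one₀ hs.le h1
    have e2 : s' ^ r ≤ 1 := pow_le_one₀ hs'.le h2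
    rw [max_eq_left h1, max_eq_left h2] at *
    rw [_root_.abs_of_nonneg (by linarith : (0:ℝ) ≤ 1 - s^r)] at h
    rw [
        _root_.abs_of_nonneg (by linarith : (0:ℝ) ≤ 1 - s'^r)] at h ⊢
    simp only [one_pow, div_one] at h ⊢
    have hss : s' ≤ s :=
      (pow_le_pow_iff_left₀ hs'.le hs.le hr0).mp (by linarith)
    rw [_root_.abs_of_nonneg (by linarith)]
    have hb : s'^r ≤ s' := pow_le_of_le_one hs'.le h2 hr0
    nlinarith
  · -- s ≤ 1 ≤ s'
    have e1 : s ^ r ≤ 1 := pow_le_one₀ hs.le h1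
    have e2 : 1 ≤ s' ^ r := one_le_pow₀ h2
    rw [max_eq_left h1, max_eq_right h2] at *
    rw [_root_.abs_of_nonneg (by linarith : (0:ℝ) ≤ 1 - s^r)] at h
    rw [
        _root_.abs_of_nonpos (by linarith : 1 - s'^r ≤ 0)] at h ⊢
    have hB : (0:ℝ) < s'^r := by positivity
    rw [_root_.abs_of_nonpos (by linarith)]
    simp only [one_pow, div_one] at h
    rw [neg_sub, le_div_iff₀ hB] at h
    have hb : s' ≤ s'^r := le_self_pow₀ h2 hr0
    have ha : s^r ≤ s := pow_le_of_le_one hs.le h1 hr0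
    rw [neg_sub, neg_sub, mul_one, ← mul_div_assoc, le_div_iff₀ hB]
    nlinarith [sq_nonneg (s'^r - 1)]
  · -- s' ≤ 1 ≤ s
    have e1 : 1 ≤ s ^ r := one_le_pow₀ h1
    have e2 : s' ^ r ≤ 1 := pow_le_one₀ hs'.le h2
    rw [max_eq_right h1, max_eq_left h2] at *
    rw [_root_.abs_of_nonpos (by linarith : 1 - s^r ≤ 0)] at h
    rw [
        _root_.abs_of_nonneg (by linarith : (0:ℝ) ≤ 1 - s'^r)] at h ⊢
    have hA : (0:ℝ) < s^r := by positivity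
    rw [_root_.abs_of_nonneg (by linarith)]
    simp only [one_pow, div_one] at h ⊢
    rw [neg_sub, div_le_iff₀ hA] at h
    have ha : s ≤ s^r := le_self_pow₀ h1 hr0
    have hb : s'^r ≤ s' := pow_le_of_le_one hs'.le h2 hr0
    nlinarith
  · -- 1 ≤ s, 1 ≤ s'
    have e1 : 1 ≤ s ^ r := one_le_pow₀ h1
    have e2 : 1 ≤ s' ^ r := one_le_pow₀ h2
    rw [max_eq_right h1, max_eq_right h2] at *
    rw [_root_.abs_of_nonpos (by linarith : 1 - s^r ≤ 0)] at h
    rw [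
        _root_.abs_of_nonpos (by linarith : 1 - s'^r ≤ 0)] at h ⊢
    have hA : (0:ℝ) < s^r := by positivity
    have hB : (0:ℝ) < s'^r := by positivity
    rw [neg_sub, neg_sub, div_le_div_iff₀ hA hB] at h
    have hss : s ≤ s' := by
      refine (pow_le_pow_iff_left₀ hs.le hs'.le hr0).mp ?_
      nlinarith
    rw [_root_.abs_of_nonpos (by linarith)]
    have hb : s' ≤ s'^r := le_self_pow₀ h2 hr0
    rw [neg_sub, neg_sub, ← mul_div_assoc, le_div_iff₀ hB]
    nlinarith [mul_nonneg (by linarith : (0:ℝ) ≤ s - 1) hB.le,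
      mul_nonneg (mul_nonneg hs'.le (by linarith : (0:ℝ) ≤ s'^r - 1)) (by linarith : (0:ℝ) ≤ 2*s - 1)]
open Complex

lemma pow_eq_abs_pow (r : ℕ) (u v : ℂ) (hu : u ≠ 0) (hv : v ≠ 0)
    (hreal : ((v/u)^r).im = 0)
    (hlt : ‖(u^r - v^r)‖ < max (‖u‖) (‖v‖) ^ r) :
    (v/u)^r = ((‖(v/u)‖ ^ r : ℝ) : ℂ) := by
  set t : ℝ := ((v/u)^r).re with ht
  have hxt : (v/u)^r = (t : ℂ) := by
    apply Complex.ext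
    · exact ht.symm
    · simpa using hreal
  have hu0 : (‖u‖) ≠ 0 := by simpa using hu
  have hvr : v ^ r = (t : ℂ) * u ^ r := by
    rw [div_pow, div_eq_iff (pow_ne_zero _ hu)] at hxt
    exact hxt
  have habsv : ‖v‖ ^ r = |t| * ‖u‖ ^ r := by
    rw [← norm_pow, ← norm_pow, hvr, norm_mul, Complex.norm_real, Real.norm_eq_abs]
  have ht0 : 0 < t := by
    by_contra hc
    push_neg at hc
    have key : ‖(u ^ r - v ^ r)‖ = (1 - t) * ‖u‖ ^ r := by
      rw [hvr]
      have : u ^ r - (t:ℂ) * u ^ r = ((1 - t : ℝ) : ℂ) * u ^ r := by push_cast; ring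
      rw [this, norm_mul, Complex.norm_real, Real.norm_eq_abs, norm_pow,
        _root_.abs_of_nonneg (by linarith : (0:ℝ) ≤ 1 - t)]
    rcases le_total (‖v‖) (‖u‖) with hm | hm
    · rw [max_eq_left hm, key] at hlt
      nlinarith [pow_pos (norm_pos_iff.mpr hu) r]
    · rw [max_eq_right hm, key] at hlt
      rw [habsv, _root_.abs_of_nonpos hc] at hlt
      nlinarith [pow_pos (norm_pos_iff.mpr hu) r]
  rw [hxt]
  congr 1
  rw [norm_div, div_pow, habsv, _root_.abs_of_pos ht0]
  field_simp

lemma align (r : ℕ) (hr : 1 ≤ r) (ω x : ℂ) (hω : ω ^ r = 1) (hx : x ≠ 0)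
    (hxr : x ^ r = ((‖x‖ ^ r : ℝ) : ℂ))
    (harg : (x⁻¹ * ω⁻¹).arg ∈ Set.Ioc (-(Real.pi / r)) (Real.pi / r)) :
    x = (‖x‖ : ℂ) * ω⁻¹ := by
  have hr0 : r ≠ 0 := by omega
  have hω0 : ω ≠ 0 := by
    intro h; rw [h, zero_pow hr0] at hω; exact zero_ne_one hω
  have hax : (0:ℝ) < ‖x‖ := norm_pos_iff.mpr hx
  set ξ : ℂ := ((‖x‖ : ℝ) : ℂ) * (x⁻¹ * ω⁻¹) with hξ
  have hξr : ξ ^ r = 1 := by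
    rw [hξ, mul_pow, mul_pow, inv_pow, inv_pow, hω, inv_one, mul_one, hxr]
    rw [← Complex.ofReal_pow]
    rw [mul_inv_cancel₀ (by exact_mod_cast (pow_pos hax r).ne')]
  have hargξ : ξ.arg = (x⁻¹ * ω⁻¹).arg := Complex.arg_real_mul _ hax
  have haξ : ‖ξ‖ = 1 := by
    have h1 : ‖ξ‖ ^ r = 1 := by rw [← norm_pow, hξr, norm_one]
    rcases lt_trichotomy (‖ξ‖) 1 with hc | hc | hc
    · exact absurd h1 (by nlinarith [pow_lt_one₀ (norm_nonneg ξ) hc hr0])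
    · exact hc
    · exact absurd h1 (by nlinarith [one_lt_pow₀ hc hr0])
  obtain ⟨θ, hθmem, hθ⟩ : ∃ θ : ℝ, θ ∈ Set.Ioc (-(Real.pi / r)) (Real.pi / r) ∧
      ξ = Complex.exp (θ * Complex.I) := by
    refine ⟨ξ.arg, by rw [hargξ]; exact harg, ?_⟩
    conv_lhs => rw [← Complex.norm_mul_exp_arg_mul_I ξ]
    rw [haξ]; simp
  have hrpos : (0:ℝ) < r := by
    have : 0 < r := hr0.bot_lt
    exact_mod_cast this
  have hexp1 : Complex.exp (((r : ℝ) * θ : ℝ) * Complex.I) = 1 := by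
    rw [← hξr, hθ, ← Complex.exp_nat_mul]
    push_cast
    ring_nf
  rw [Complex.exp_eq_one_iff] at hexp1
  obtain ⟨n, hn⟩ := hexp1
  have hn' : (r : ℝ) * θ = n * (2 * Real.pi) := by
    have := congrArg Complex.im hn
    simpa using this
  have hθ0 : θ = 0 := by
    obtain ⟨hθ1, hθ2⟩ := hθmem
    have hpi : 0 < Real.pi := Real.pi_pos
    have hb1 : -(Real.pi) < (r:ℝ) * θ := by
      have h := mul_lt_mul_of_pos_left hθ1 hrpos
      rw [mul_neg, mul_div_cancel₀ _ hrpos.ne'] at h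
      linarith
    have hb2 : (r:ℝ) * θ ≤ Real.pi := by
      have h := mul_le_mul_of_nonneg_left hθ2 hrpos.le
      rw [mul_div_cancel₀ _ hrpos.ne'] at h
      linarith
    have hn0 : n = 0 := by
      rcases lt_trichotomy n 0 with hc | hc | hc
      · have : (n:ℝ) ≤ -1 := by exact_mod_cast (by omega : n ≤ -1)
        nlinarith
      · exact hc
      · have : (1:ℝ) ≤ n := by exact_mod_cast hc
        nlinarith
    rw [hn0] at hn'
    simp at hn'
    rcases hn' with h | h
    · exact absurd h (by positivity)
    · exact h
  rw [hθ0] at hθ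
  simp at hθ
  -- ξ = 1
  rw [hξ] at hθ
  field_simp at hθ
  rw [eq_comm, mul_comm] at hθ
  field_simp
  linear_combination hθ

lemma abs_one_of_pow {z : ℂ} {r : ℕ} (hr : r ≠ 0) (h : z ^ r = 1) : ‖z‖ = 1 := by
  have h1 : ‖z‖ ^ r = 1 := by rw [← norm_pow, h, norm_one]
  rcases lt_trichotomy (‖z‖) 1 with hc | hc | hc
  · exact absurd h1 (by nlinarith [pow_lt_one₀ (norm_nonneg z) hc hr])
  · exact hc
  · exact absurd h1 (by nlinarith [one_lt_pow₀ hc hr])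


/-- Let `r ≥ 1`, let `ω` be an `r`-th root of unity, and let
`u', v', u, v` be nonzero complex numbers such that `(v'/u')^r` and `(v/u)^r` are real,
and `ω` is related both to `(u',v')` and to `(u,v)`. With `Z' = max(|u'|,|v'|)`,
`Z = max(|u|,|v|)`, `ζ' = |u'^r − v'^r|/Z'^r`, `ζ = |u^r − v^r|/Z^r`, if `ζ ≤ ζ'` and
`ζ < 1` then `|u'·v − u·v'| ≤ 2·Z'·Z·ζ'`. -/
theorem wronskian_bound (r : ℕ) (hr : 1 ≤ r) (ω : ℂ) (hω : ω ^ r = 1)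
    (u' v' u v : ℂ) (hu' : u' ≠ 0) (hv' : v' ≠ 0) (hu : u ≠ 0) (hv : v ≠ 0)
    (hreal' : ((v' / u') ^ r).im = 0) (hreal : ((v / u) ^ r).im = 0)
    (hrel' : (u' / v' * ω⁻¹).arg ∈ Set.Ioc (-(Real.pi / r)) (Real.pi / r))
    (hrel : (u / v * ω⁻¹).arg ∈ Set.Ioc (-(Real.pi / r)) (Real.pi / r))
    (Z' Z ζ' ζ : ℝ)
    (hZ' : Z' = max (‖u'‖) ‖v'‖)
    (hZ : Z = max ‖u‖ ‖v‖)
    (hζ' : ζ' = ‖u' ^ r - v' ^ r‖ / Z' ^ r)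
    (hζ : ζ = ‖u ^ r - v ^ r‖ / Z ^ r)
    (hle : ζ ≤ ζ') (hlt : ζ < 1) :
    ‖u' * v - u * v'‖ ≤ 2 * Z' * Z * ζ' := by
  have hr0 : r ≠ 0 := by omega
  have hau : 0 < ‖u‖ := norm_pos_iff.mpr hu
  have hav : 0 < ‖v‖ := norm_pos_iff.mpr hv
  have hau' : 0 < ‖u'‖ := norm_pos_iff.mpr hu'
  have hav' : 0 < ‖v'‖ := norm_pos_iff.mpr hv'
  have hZ'pos : 0 < Z' := by rw [hZ']; exact lt_max_of_lt_left hau'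
  have hZpos : 0 < Z := by rw [hZ]; exact lt_max_of_lt_left hau
  by_cases hc : 1 ≤ ζ'
  · -- trivial bound
    calc ‖(u' * v - u * v')‖
        ≤ ‖(u' * v)‖ + ‖(u * v')‖ := by
          simpa using norm_sub_le (u' * v) (u * v')
      _ ≤ Z' * Z + Z' * Z := by
          rw [norm_mul, norm_mul]
          have h1 : ‖u'‖ * ‖v‖ ≤ Z' * Z := by
            apply mul_le_mul ?_ ?_ (norm_nonneg _) hZ'pos.le
            · rw [hZ']; exact le_max_left _ _
            · rw [hZ]; exact le_max_right _ _
          have h2 : ‖u‖ * ‖v'‖ ≤ Z * Z' := by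
            apply mul_le_mul ?_ ?_ (norm_nonneg _) hZpos.le
            · rw [hZ]; exact le_max_left _ _
            · rw [hZ']; exact le_max_right _ _
          linarith [h2, mul_comm Z Z']
          
      _ = 2 * Z' * Z * 1 := by ring
      _ ≤ 2 * Z' * Z * ζ' := by
          have : (0:ℝ) < 2 * Z' * Z := by positivity
          nlinarith
  · push_neg at hc
    -- ζ' < 1, ζ < 1
    have hlt' : ‖(u' ^ r - v' ^ r)‖ < max (‖u'‖) (‖v'‖) ^ r := by
      rw [← hZ']
      have hZ'r : (0:ℝ) < Z' ^ r := by positivity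
      rw [hζ', div_lt_one hZ'r] at hc
      exact hc
    have hltu : ‖(u ^ r - v ^ r)‖ < max (‖u‖) (‖v‖) ^ r := by
      rw [← hZ]
      have hZr : (0:ℝ) < Z ^ r := by positivity
      rw [hζ, div_lt_one hZr] at hlt
      exact hlt
    have hx'r := pow_eq_abs_pow r u' v' hu' hv' hreal' hlt'
    have hxr := pow_eq_abs_pow r u v hu hv hreal hltu
    have hx' : v' / u' = ((‖(v'/u')‖ : ℝ) : ℂ) * ω⁻¹ := by
      apply align r hr ω _ hω (div_ne_zero hv' hu') hx'r
      rw [inv_div]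
      exact hrel'
    have hx : v / u = ((‖(v/u)‖ : ℝ) : ℂ) * ω⁻¹ := by
      apply align r hr ω _ hω (div_ne_zero hv hu) hxr
      rw [inv_div]
      exact hrel
    set s : ℝ := ‖(v/u)‖ with hsdef
    set s' : ℝ := ‖(v'/u')‖ with hs'def
    have hs : 0 < s := norm_pos_iff.mpr (div_ne_zero hv hu)
    have hs' : 0 < s' := norm_pos_iff.mpr (div_ne_zero hv' hu')
    have habsω : ‖ω‖ = 1 := abs_one_of_pow hr0 hω
    have habsv : ‖v‖ = s * ‖u‖ := by
      rw [hsdef, norm_div]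
      field_simp
    have habsv' : ‖v'‖ = s' * ‖u'‖ := by
      rw [hs'def, norm_div]
      field_simp
    -- LHS
    have hLHS : ‖(u' * v - u * v')‖ = ‖u'‖ * ‖u‖ * |s - s'| := by
      have he : u' * v - u * v' = (u' * u) * (((s : ℂ) - (s' : ℂ)) * ω⁻¹) := by
        have h1 : v = ((s:ℂ) * ω⁻¹) * u := by
          rw [← hx]; field_simp
        have h2 : v' = ((s':ℂ) * ω⁻¹) * u' := by
          rw [← hx']; field_simp
        rw [h1, h2]; ring
      rw [he, norm_mul, norm_mul, norm_mul, norm_inv, habsω, inv_one, mul_one,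
        ← Complex.ofReal_sub, Complex.norm_real, Real.norm_eq_abs]
    -- Z and Z'
    have hZeq : Z = ‖u‖ * max 1 s := by
      rw [hZ, habsv, mul_max_of_nonneg _ _ hau.le, mul_one, mul_comm s]
    have hZ'eq : Z' = ‖u'‖ * max 1 s' := by
      rw [hZ', habsv', mul_max_of_nonneg _ _ hau'.le, mul_one, mul_comm s']
    -- ζ and ζ'
    have hnum : ‖(u ^ r - v ^ r)‖ = ‖u‖ ^ r * |1 - s ^ r| := by
      have he : u ^ r - v ^ r = u ^ r * (((1 - s ^ r : ℝ)) : ℂ) := by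
        have h1 : v ^ r = ((s ^ r : ℝ) : ℂ) * u ^ r := by
          have := hxr
          rw [div_pow] at this
          field_simp at this
          push_cast at this ⊢
          linear_combination this
        rw [h1]; push_cast; ring
      rw [he, norm_mul, Complex.norm_real, Real.norm_eq_abs, norm_pow]
    have hnum' : ‖(u' ^ r - v' ^ r)‖ = ‖u'‖ ^ r * |1 - s' ^ r| := by
      have he : u' ^ r - v' ^ r = u' ^ r * (((1 - s' ^ r : ℝ)) : ℂ) := by
        have h1 : v' ^ r = ((s' ^ r : ℝ) : ℂ) * u' ^ r := by
          have := hx'r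
          rw [div_pow] at this
          field_simp at this
          push_cast at this ⊢
          linear_combination this
        rw [h1]; push_cast; ring
      rw [he, norm_mul, Complex.norm_real, Real.norm_eq_abs, norm_pow]
    have hζeq : ζ = |1 - s ^ r| / max 1 s ^ r := by
      rw [hζ, hnum, hZeq, mul_pow]
      rw [mul_div_mul_left _ _ (by positivity : (‖u‖ ^ r) ≠ 0)]
    have hζ'eq : ζ' = |1 - s' ^ r| / max 1 s' ^ r := by
      rw [hζ', hnum', hZ'eq, mul_pow]
      rw [mul_div_mul_left _ _ (by positivity : (‖u'‖ ^ r) ≠ 0)]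
    -- apply key_real
    have hkey := key_real r hr s s' hs hs' (by rw [← hζeq, ← hζ'eq]; exact hle)
    rw [hLHS, hZ'eq, hZeq, hζ'eq]
    calc ‖u'‖ * ‖u‖ * |s - s'|
        ≤ ‖u'‖ * ‖u‖ *
            (2 * max 1 s' * max 1 s * (|1 - s' ^ r| / max 1 s' ^ r)) := by
          apply mul_le_mul_of_nonneg_left hkey (by positivity)
      _ = 2 * (‖u'‖ * max 1 s') * (‖u‖ * max 1 s) *
            (|1 - s' ^ r| / max 1 s' ^ r) := by ring
end

section
/- Let (x,y) and (x*,y*) be primitive solutions of 0 < |F(x,y)| ≤ h with (x*,y*) ∉ {(x,y), (−x,−y)}, both related to the same r-th root of unity ω, such that u(x,y), v(x,y), u(x*,y*), v(x*,y*) are nonzero, and suppose μ(x,y) and μ(x*,y*) are real (the case D > 0) and ζ(x*,y*) ≤ ζ(x,y). Then Z(x*,y*) ≥ |j|/(2·h^{1/r}). -/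
open Complex

noncomputable section

/-- The linear form `αx + βy` evaluated at an integer pair. -/
def lin (α β : ℂ) (x y : ℤ) : ℂ := α * (x : ℂ) + β * (y : ℂ)

/-- The diagonalizable binary form `F(x,y) = (αx+βy)^r − (γx+δy)^r`. -/
def form (α β γ δ : ℂ) (r : ℕ) (x y : ℤ) : ℂ := lin α β x y ^ r - lin γ δ x y ^ r

/-- `Z(x,y) = max(|u|,|v|)`. -/
def Zmax (α β γ δ : ℂ) (x y : ℤ) : ℝ :=
  max (‖lin α β x y‖) (‖lin γ δ x y‖)

/-- `ζ(x,y) = |F(x,y)| / Z(x,y)^r`. -/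
def zetaF (α β γ δ : ℂ) (r : ℕ) (x y : ℤ) : ℝ :=
  ‖form α β γ δ r x y‖ / Zmax α β γ δ x y ^ r

/-- `μ(x,y) = v^r / u^r`. -/
def muF (α β γ δ : ℂ) (r : ℕ) (x y : ℤ) : ℂ :=
  lin γ δ x y ^ r / lin α β x y ^ r

/-- `F` has integer coefficients: each coefficient
`binom(r,k)·(α^k β^{r−k} − γ^k δ^{r−k})` is a rational integer. -/
def IntCoeffs (α β γ δ : ℂ) (r : ℕ) : Prop :=
  ∀ k ≤ r, ∃ n : ℤ, (r.choose k : ℂ) * (α ^ k * β ^ (r - k) - γ ^ k * δ ^ (r - k)) = (n : ℂ)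

/-- `(x,y)` is a primitive solution of the Thue inequality `0 < |F(x,y)| ≤ h`. -/
def IsPrimSol (α β γ δ : ℂ) (r h : ℕ) (x y : ℤ) : Prop :=
  Int.gcd x y = 1 ∧ 0 < ‖form α β γ δ r x y‖ ∧
    ‖form α β γ δ r x y‖ ≤ (h : ℝ)

/-- The solution `(x,y)` is related to the `r`-th root of unity `ω`: the principal
argument of `(u/v)·ω⁻¹` lies in `(−π/r, π/r]`. -/
def RelatedTo (α β γ δ : ℂ) (r : ℕ) (ω : ℂ) (x y : ℤ) : Prop :=
  (lin α β x y / lin γ δ x y * ω⁻¹).arg ∈ Set.Ioc (-(Real.pi / r)) (Real.pi / r)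


/-- |s-1|^r ≤ |s^r - 1| for s ≥ 0, r ≥ 1. -/
lemma real_ineq1 (r : ℕ) (hr : 1 ≤ r) (s : ℝ) (hs : 0 ≤ s) :
    |s - 1| ^ r ≤ |s ^ r - 1| := by
  have hrne : r ≠ 0 := by omega
  rcases le_total s 1 with h | h
  · have h1 : s ^ r ≤ 1 := pow_le_one₀ hs h
    have key : (1 - s) ^ r + s ^ r ≤ 1 := by
      have := pow_add_pow_le (x := 1 - s) (y := s) (n := r) (by linarith) hs hrne
      have h2 : (1 - s + s) = 1 := by ring
      rw [h2, one_pow] at this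
      exact this
    rw [abs_of_nonpos (by linarith), abs_of_nonpos (by linarith), neg_sub, neg_sub]
    have : 0 ≤ s ^ r := pow_nonneg hs r
    linarith
  · have h1 : 1 ≤ s ^ r := one_le_pow₀ h
    have key : (s - 1) ^ r + 1 ≤ s ^ r := by
      have := pow_add_pow_le (x := s - 1) (y := 1) (n := r) (by linarith) zero_le_one hrne
      have h2 : (s - 1 + 1) = s := by ring
      rw [h2, one_pow] at this
      exact this
    rw [_root_.abs_of_nonneg (by linarith), _root_.abs_of_nonneg (by linarith)]
    linarith

lemma real_ineq2 (r : ℕ) (hr : 2 ≤ r) (s : ℝ) (hs : 0 ≤ s) :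
    (s ^ 2 - 2 * s * Real.cos (Real.pi / r) + 1) ^ r ≤ (s ^ r + 1) ^ 2 := by
  set c := Real.cos (Real.pi / r) with hc
  have hc1 : c ≤ 1 := Real.cos_le_one _
  have hbase0 : 0 ≤ s ^ 2 - 2 * s * c + 1 := by nlinarith [sq_nonneg (s - 1)]
  have hM : s ^ 2 - 2 * s * c + 1 ≤ max 1 s ^ 2 → (s^2 - 2*s*c+1)^r ≤ (s^r+1)^2 := by
    intro hle
    have hM0 : (0:ℝ) ≤ max 1 s := le_trans zero_le_one (le_max_left 1 s)
    have h1 : (s ^ 2 - 2*s*c + 1) ^ r ≤ (max 1 s ^ 2) ^ r := pow_le_pow_left₀ hbase0 hle r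
    have h2 : (max 1 s ^ 2) ^ r = (max 1 s ^ r) ^ 2 := by
      rw [← pow_mul, ← pow_mul, Nat.mul_comm]
    have h3 : max 1 s ^ r ≤ s ^ r + 1 := by
      rcases le_total s 1 with hs1 | hs1
      · rw [max_eq_left hs1, one_pow]
        nlinarith [pow_nonneg hs r]
      · rw [max_eq_right hs1]; nlinarith
    have h4 : (max 1 s ^ r) ^ 2 ≤ (s ^ r + 1) ^ 2 :=
      pow_le_pow_left₀ (pow_nonneg hM0 r) h3 2
    calc (s ^ 2 - 2*s*c + 1) ^ r ≤ (max 1 s ^2)^r := h1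
      _ = (max 1 s ^r)^2 := h2
      _ ≤ (s^r+1)^2 := h4
  rcases eq_or_lt_of_le hr with h2 | h3
  · -- r = 2
    have hc0 : c = 0 := by
      rw [hc, ← h2]; norm_num [Real.cos_pi_div_two]
    rw [← h2, hc0]
    ring_nf
    norm_num
  · -- r ≥ 3
    have hr3 : (3:ℕ) ≤ r := h3
    have hchalf : (1:ℝ)/2 ≤ c := by
      rw [hc, ← Real.cos_pi_div_three]
      apply Real.cos_le_cos_of_nonneg_of_le_pi
      · positivity
      · linarith [Real.pi_pos]
      · apply div_le_div_of_nonneg_left Real.pi_pos.le (by norm_num)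
        exact_mod_cast hr3
    apply hM
    rcases le_total s 1 with hs1 | hs1
    · rw [max_eq_left hs1]; nlinarith
    · rw [max_eq_right hs1]; nlinarith


lemma key_abs (r : ℕ) (hr : 2 ≤ r) (t : ℂ) (ht : t ≠ 0) (htr : (t ^ r).im = 0)
    (harg : t.arg ∈ Set.Ioc (-(Real.pi / r)) (Real.pi / r)) :
    ‖t - 1‖ ^ r ≤ ‖t ^ r - 1‖ := by
  obtain ⟨hal, har⟩ := harg
  have hrR : (0:ℝ) < (r:ℝ) := by positivity
  set s := ‖t‖ with hs
  set θ := t.arg with hθ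
  have hs0 : 0 < s := norm_pos_iff.mpr ht
  have hteq : (s : ℂ) * Complex.exp (θ * I) = t := Complex.norm_mul_exp_arg_mul_I t
  have htpow : t ^ r = (s:ℂ) ^ r * Complex.exp ((r * θ : ℝ) * I) := by
    rw [← hteq, mul_pow, ← Complex.exp_nat_mul]
    push_cast
    ring_nf
  -- sin (r θ) = 0
  have hsin : Real.sin (r * θ) = 0 := by
    have h1 : (t ^ r).im = s ^ r * Real.sin (r * θ) := by
      rw [htpow, ← Complex.ofReal_pow]
      simp only [Complex.mul_im, Complex.ofReal_re, Complex.ofReal_im,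
        Complex.exp_ofReal_mul_I_im, Complex.exp_ofReal_mul_I_re]
      ring
    rw [htr] at h1
    have : s ^ r ≠ 0 := pow_ne_zero _ (ne_of_gt hs0)
    field_simp at h1
    exact (mul_eq_zero.mp h1.symm).resolve_left this
  -- r θ ∈ (-π, π]
  have hlo : -Real.pi < r * θ := by
    have : -(Real.pi / r) * r < θ * r := by
      apply mul_lt_mul_of_pos_right hal hrR
    rw [neg_mul, div_mul_cancel₀] at this
    · linarith [this]
    · exact ne_of_gt hrR
  have hhi : r * θ ≤ Real.pi := by
    have : θ * r ≤ Real.pi / r * r := mul_le_mul_of_nonneg_right har hrR.le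
    rw [div_mul_cancel₀] at this
    · linarith
    · exact ne_of_gt hrR
  obtain ⟨n, hn⟩ := Real.sin_eq_zero_iff.mp hsin
  have hn01 : n = 0 ∨ n = 1 := by
    have hpi := Real.pi_pos
    have h1 : -Real.pi < (n:ℝ) * Real.pi := by rw [hn]; exact hlo
    have h2 : (n:ℝ) * Real.pi ≤ Real.pi := by rw [hn]; exact hhi
    have : (-1:ℝ) < (n:ℝ) := by nlinarith
    have : (n:ℝ) ≤ 1 := by nlinarith
    have : (-1:ℤ) < n := by exact_mod_cast ‹(-1:ℝ) < (n:ℝ)›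
    have : n ≤ 1 := by exact_mod_cast ‹(n:ℝ) ≤ 1›
    omega
  rcases hn01 with hn0 | hn1
  · -- θ = 0, t = s real positive
    have hθ0 : θ = 0 := by
      have : (0:ℝ) = r * θ := by rw [← hn, hn0]; norm_num
      have := this.symm
      rcases mul_eq_zero.mp this with h | h
      · exact absurd h (ne_of_gt hrR)
      · exact h
    have ht' : t = (s : ℂ) := by
      rw [← hteq, hθ0]
      norm_num
    rw [ht']
    have e1 : ((s:ℂ) - 1) = ((s - 1 : ℝ) : ℂ) := by push_cast; ring
    have e2 : ((s:ℂ) ^ r - 1) = ((s ^ r - 1 : ℝ) : ℂ) := by push_cast; ring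
    rw [e1, e2, Complex.norm_real, Complex.norm_real, Real.norm_eq_abs, Real.norm_eq_abs]
    exact real_ineq1 r (by omega) s hs0.le
  · -- r θ = π, θ = π / r
    have hθpi : θ = Real.pi / r := by
      have : (r:ℝ) * θ = Real.pi := by rw [← hn, hn1]; norm_num
      field_simp
      linarith [this]
    -- t^r = -s^r
    have htpow' : t ^ r = -(s:ℂ) ^ r := by
      rw [htpow]
      have : (r * θ : ℝ) = Real.pi := by rw [hθpi]; field_simp
      rw [this, Complex.exp_pi_mul_I]
      ring
    -- |t^r - 1| = s^r + 1
    have habs2 : ‖t ^ r - 1‖ = s ^ r + 1 := by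
      rw [htpow']
      have : -(s:ℂ) ^ r - 1 = ((-(s ^ r + 1) : ℝ) : ℂ) := by push_cast; ring
      rw [this, Complex.norm_real, Real.norm_eq_abs, abs_neg, _root_.abs_of_nonneg (by positivity)]
    -- |t - 1|^2 = s^2 - 2 s cos θ + 1
    have hre : t.re = s * Real.cos θ := by
      have := Complex.cos_arg ht
      rw [← hθ, ← hs] at this
      field_simp at this
      linarith [this]
    have habs1 : ‖t - 1‖ ^ 2 = s ^ 2 - 2 * s * Real.cos θ + 1 := by
      rw [Complex.sq_norm, Complex.normSq_apply]
      simp only [Complex.sub_re, Complex.sub_im, Complex.one_re, Complex.one_im]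
      have hnorm : t.re * t.re + t.im * t.im = s ^ 2 := by
        rw [← Complex.normSq_apply, ← Complex.sq_norm]
      nlinarith [hnorm, hre]
    -- conclude
    have h2 : (‖t - 1‖ ^ r) ^ 2 ≤ (‖t ^ r - 1‖) ^ 2 := by
      rw [habs2]
      calc (‖t-1‖ ^ r)^2 = (‖t-1‖ ^ 2) ^ r := by
            rw [← pow_mul, ← pow_mul, Nat.mul_comm]
        _ = (s ^ 2 - 2*s*Real.cos θ + 1) ^ r := by rw [habs1]
        _ ≤ (s ^ r + 1) ^ 2 := by rw [hθpi]; exact real_ineq2 r hr s hs0.le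
    have ha := norm_nonneg (t - 1)
    have hb := norm_nonneg (t ^ r - 1)
    nlinarith [pow_nonneg ha r]

/-- From `key_abs`: `|u - ωv|^r ≤ |u^r - v^r|`. -/
lemma key_uv (r : ℕ) (hr : 2 ≤ r) (u v ω : ℂ) (hu : u ≠ 0) (hv : v ≠ 0)
    (hω : ω ^ r = 1) (him : (v ^ r / u ^ r).im = 0)
    (harg : (u / v * ω⁻¹).arg ∈ Set.Ioc (-(Real.pi / r)) (Real.pi / r)) :
    ‖u - ω * v‖ ^ r ≤ ‖u ^ r - v ^ r‖ := by
  have hω0 : ω ≠ 0 := by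
    intro h; rw [h] at hω; simp [zero_pow (show r ≠ 0 by omega)] at hω
  set t := u / v * ω⁻¹ with htdef
  have ht0 : t ≠ 0 := by
    apply mul_ne_zero (div_ne_zero hu hv) (inv_ne_zero hω0)
  have htr : t ^ r = u ^ r / v ^ r := by
    rw [htdef, mul_pow, div_pow, inv_pow, hω, inv_one, mul_one]
  have htim : (t ^ r).im = 0 := by
    rw [htr]
    have : u ^ r / v ^ r = (v ^ r / u ^ r)⁻¹ := by
      rw [inv_div]
    rw [this, Complex.inv_im, him]
    simp
  have hk := key_abs r hr t ht0 htim harg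
  -- u - ω v = ω v (t - 1),  u^r - v^r = v^r (t^r - 1)
  have e1 : u - ω * v = ω * v * (t - 1) := by
    rw [htdef]; field_simp
  have e2 : u ^ r - v ^ r = v ^ r * (t ^ r - 1) := by
    rw [htr]; field_simp
  have habsω : ‖ω‖ = 1 := by
    have h1 : ‖ω‖ ^ r = 1 := by
      rw [← norm_pow, hω, norm_one]
    have h2 := norm_nonneg ω
    rcases lt_trichotomy (‖ω‖) 1 with h | h | h
    · have := pow_lt_one₀ h2 h (show r ≠ 0 by omega); linarith
    · exact h
    · have := one_lt_pow₀ h (show r ≠ 0 by omega); linarith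
  calc ‖u - ω * v‖ ^ r
      = (‖ω‖ * ‖v‖ * ‖t - 1‖) ^ r := by rw [e1, norm_mul, norm_mul]
    _ = ‖v‖ ^ r * ‖t - 1‖ ^ r := by rw [habsω]; ring
    _ ≤ ‖v‖ ^ r * ‖t ^ r - 1‖ := by
        apply mul_le_mul_of_nonneg_left hk (by positivity)
    _ = ‖u ^ r - v ^ r‖ := by rw [e2, norm_mul, norm_pow]


lemma det_ne (x y xs ys : ℤ) (h1 : Int.gcd x y = 1) (h2 : Int.gcd xs ys = 1)
    (hne1 : (xs, ys) ≠ (x, y)) (hne2 : (xs, ys) ≠ (-x, -y)) :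
    x * ys - xs * y ≠ 0 := by
  intro h0
  have h0' : x * ys = xs * y := by linarith
  have hc1 : IsCoprime x y := Int.isCoprime_iff_gcd_eq_one.mpr h1
  have hc2 : IsCoprime xs ys := Int.isCoprime_iff_gcd_eq_one.mpr h2
  have hd1 : x ∣ xs := hc1.dvd_of_dvd_mul_right ⟨ys, by linarith⟩
  have hd2 : xs ∣ x := hc2.dvd_of_dvd_mul_right ⟨y, by linarith⟩
  have hass := Int.associated_iff.mp (associated_of_dvd_dvd hd2 hd1)
  by_cases hx0 : x = 0
  · subst hx0
    have hxs0 : xs = 0 := by rcases hass with h | h <;> omega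
    subst hxs0
    have hy1 : y = 1 ∨ y = -1 := by
      have := h1; simp [Int.gcd] at this; omega
    have hys1 : ys = 1 ∨ ys = -1 := by
      have := h2; simp [Int.gcd] at this; omega
    rcases hy1 with h | h <;> rcases hys1 with h' | h' <;> subst h <;> subst h' <;> simp_all
  · rcases hass with h | h
    · subst h
      have : ys = y := by
        have := mul_left_cancel₀ hx0 h0'
        omega
      exact hne1 (by rw [this])
    · rw [h] at h0'
      have : ys = -y := by
        have : x * ys = x * (-y) := by linarith
        exact mul_left_cancel₀ hx0 this
      exact hne2 (by rw [h, this])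

/-- (Case `D > 0`: `μ` real.) Let `(x,y)`, `(x*,y*)` be primitive
solutions of `0 < |F| ≤ h`, distinct up to sign, both related to the same `r`-th root of
unity `ω`, with `u, v` nonzero at both solutions, `μ(x,y)` and `μ(x*,y*)` real, and
`ζ(x*,y*) ≤ ζ(x,y)`. Then `Z(x*,y*) ≥ |j|/(2·h^{1/r})`. -/
theorem Zstar_lower_bound_Dpos (r h : ℕ) (hr : 2 ≤ r) (hh : 1 ≤ h)
    (α β γ δ j : ℂ) (hj : j = α * δ - β * γ) (hj0 : j ≠ 0) (hint : IntCoeffs α β γ δ r)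
    (x y xs ys : ℤ)
    (hsol : IsPrimSol α β γ δ r h x y) (hsols : IsPrimSol α β γ δ r h xs ys)
    (hne : (xs, ys) ≠ (x, y) ∧ (xs, ys) ≠ (-x, -y))
    (hu : lin α β x y ≠ 0) (hv : lin γ δ x y ≠ 0)
    (hus : lin α β xs ys ≠ 0) (hvs : lin γ δ xs ys ≠ 0)
    (hμ : (muF α β γ δ r x y).im = 0) (hμs : (muF α β γ δ r xs ys).im = 0)
    (ω : ℂ) (hω : ω ^ r = 1)
    (hrel : RelatedTo α β γ δ r ω x y) (hrels : RelatedTo α β γ δ r ω xs ys)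
    (hζ : zetaF α β γ δ r xs ys ≤ zetaF α β γ δ r x y) :
    ‖j‖ / (2 * (h : ℝ) ^ (1 / (r : ℝ))) ≤ Zmax α β γ δ xs ys := by
  have hrne : r ≠ 0 := by omega
  set u := lin α β x y with hudef
  set v := lin γ δ x y with hvdef
  set us := lin α β xs ys with husdef
  set vs := lin γ δ xs ys with hvsdef
  set A := ‖u - ω * v‖ with hAdef
  set As := ‖us - ω * vs‖ with hAsdef
  set Z := Zmax α β γ δ x y with hZdef
  set Zs := Zmax α β γ δ xs ys with hZsdef
  set Fv := ‖form α β γ δ r x y‖ with hFvdef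
  set Fs := ‖form α β γ δ r xs ys‖ with hFsdef
  set H := (h : ℝ) ^ (1 / (r : ℝ)) with hHdef
  have hh0 : (0:ℝ) < (h:ℝ) := by exact_mod_cast hh
  have hH0 : 0 < H := Real.rpow_pos_of_pos hh0 _
  have hHr : H ^ r = (h : ℝ) := by
    rw [hHdef, ← Real.rpow_natCast ((h:ℝ) ^ (1/(r:ℝ))) r, ← Real.rpow_mul hh0.le,
      one_div, inv_mul_cancel₀ (by exact_mod_cast hrne), Real.rpow_one]
  -- Z, Zs positive
  have hZ0 : 0 < Z := lt_of_lt_of_le (norm_pos_iff.mpr hu) (le_max_left _ _)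
  have hZs0 : 0 < Zs := lt_of_lt_of_le (norm_pos_iff.mpr hus) (le_max_left _ _)
  have hvZ : ‖v‖ ≤ Z := le_max_right _ _
  have hvsZs : ‖vs‖ ≤ Zs := le_max_right _ _
  -- key bounds
  have hA : A ^ r ≤ Fv := key_uv r hr u v ω hu hv hω hμ hrel
  have hAs : As ^ r ≤ Fs := key_uv r hr us vs ω hus hvs hω hμs hrels
  have hFh : Fv ≤ (h:ℝ) := hsol.2.2
  have hFsh : Fs ≤ (h:ℝ) := hsols.2.2
  have hA0 : 0 ≤ A := norm_nonneg _
  have hAs0 : 0 ≤ As := norm_nonneg _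
  -- A ≤ H
  have hAH : A ≤ H := by
    have : A ^ r ≤ H ^ r := by rw [hHr]; exact le_trans hA hFh
    exact (pow_le_pow_iff_left₀ hA0 hH0.le hrne).mp this
  -- As * Z ≤ H * Zs
  have hζ' : Fs * Z ^ r ≤ Fv * Zs ^ r := by
    have h1 : Fs / Zs ^ r ≤ Fv / Z ^ r := hζ
    rw [div_le_div_iff₀ (by positivity) (by positivity)] at h1
    linarith
  have hAsZ : As * Z ≤ H * Zs := by
    have h1 : (As * Z) ^ r ≤ (H * Zs) ^ r := by
      rw [mul_pow, mul_pow, hHr]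
      calc As ^ r * Z ^ r ≤ Fs * Z ^ r := by
            apply mul_le_mul_of_nonneg_right hAs (by positivity)
        _ ≤ Fv * Zs ^ r := hζ'
        _ ≤ (h:ℝ) * Zs ^ r := by apply mul_le_mul_of_nonneg_right hFh (by positivity)
    exact (pow_le_pow_iff_left₀ (by positivity) (by positivity) hrne).mp h1
  -- determinant
  have hd := det_ne x y xs ys hsol.1 hsols.1 hne.1 hne.2
  have hdet : u * vs - us * v = j * ((x * ys - xs * y : ℤ) : ℂ) := by
    rw [hudef, hvdef, husdef, hvsdef, hj]
    simp only [lin]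
    push_cast
    ring
  have hd1 : (1:ℝ) ≤ ‖((x * ys - xs * y : ℤ) : ℂ)‖ := by
    rw [Complex.norm_intCast]
    have : (1:ℤ) ≤ |x * ys - xs * y| := Int.one_le_abs hd
    calc (1:ℝ) ≤ (|x * ys - xs * y| : ℤ) := by exact_mod_cast this
      _ = |((x * ys - xs * y : ℤ) : ℝ)| := by rw [Int.cast_abs]
  have hjle : ‖j‖ ≤ A * Zs + As * Z := by
    have h1 : ‖j‖ ≤ ‖u * vs - us * v‖ := by
      rw [hdet, norm_mul]
      nlinarith [norm_nonneg j]
    have h2 : u * vs - us * v = (u - ω * v) * vs - (us - ω * vs) * v := by ring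
    have h3 : ‖u * vs - us * v‖ ≤ A * ‖vs‖ + As * ‖v‖ := by
      rw [h2]
      calc ‖(u - ω * v) * vs - (us - ω * vs) * v‖
          ≤ ‖(u - ω * v) * vs‖ + ‖(us - ω * vs) * v‖ :=
            norm_sub_le _ _
        _ = A * ‖vs‖ + As * ‖v‖ := by rw [norm_mul, norm_mul]
    have h4 : A * ‖vs‖ ≤ A * Zs := mul_le_mul_of_nonneg_left hvsZs hA0
    have h5 : As * ‖v‖ ≤ As * Z := mul_le_mul_of_nonneg_left hvZ hAs0
    linarith
  rw [div_le_iff₀ (by positivity)]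
  have hfin : A * Zs ≤ H * Zs := mul_le_mul_of_nonneg_right hAH hZs0.le
  calc ‖j‖ ≤ A * Zs + As * Z := hjle
    _ ≤ H * Zs + H * Zs := by linarith
    _ = Zs * (2 * H) := by ring
end
end

section
/- Let (x,y) and (x*,y*) be primitive solutions of 0 < |F(x,y)| ≤ h with (x*,y*) ∉ {(x,y), (−x,−y)} and ζ(x*,y*) ≤ ζ(x,y). Then |j| ≤ 2·h^{2/r}·ζ(x*,y*)^{−2/r}, and hence ζ(x*,y*) ≤ 2^{r/2}·h·|j|^{−r/2}. In particular, for any real ν ≥ 0, if |j| > 2^{1+2ν/r}·h^{2/r} then ζ(x*,y*) < 2^{−ν}; in particular if |j| > 2·h^{2/r} then ζ(x*,y*) < 1. -/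
open Complex

noncomputable section

private lemma cross_ne_zero {x y xs ys : ℤ} (hx : Int.gcd x y = 1)
    (hxys : Int.gcd xs ys = 1) (h1 : (xs, ys) ≠ (x, y)) (h2 : (xs, ys) ≠ (-x, -y)) :
    x * ys - xs * y ≠ 0 := by
  intro h0
  have hxy : x * ys = xs * y := by linarith
  obtain ⟨a, b, hab⟩ := Int.isCoprime_iff_gcd_eq_one.mpr hx
  set t := a * xs + b * ys with ht
  have hxs' : xs = x * t := by
    calc xs = xs * (a * x + b * y) := by rw [hab]; ring
      _ = a * x * xs + b * (xs * y) := by ring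
      _ = a * x * xs + b * (x * ys) := by rw [hxy]
      _ = x * t := by rw [ht]; ring
  have hys' : ys = y * t := by
    calc ys = ys * (a * x + b * y) := by rw [hab]; ring
      _ = a * (x * ys) + b * y * ys := by ring
      _ = a * (xs * y) + b * y * ys := by rw [hxy]
      _ = y * t := by rw [ht]; ring
  have hg : Int.gcd xs ys = Int.gcd x y * t.natAbs := by
    rw [hxs', hys', Int.gcd_mul_right]
  rw [hxys, hx, one_mul] at hg
  rcases Int.natAbs_eq_iff.mp hg.symm with htt | htt
  · exact h1 (by simp [hxs', hys', htt])
  · exact h2 (by simp [hxs', hys', htt])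

/-- Let `(x,y)`, `(x*,y*)` be primitive solutions of `0 < |F| ≤ h`,
distinct up to sign, with `ζ(x*,y*) ≤ ζ(x,y)`. Then `|j| ≤ 2·h^{2/r}·ζ(x*,y*)^{−2/r}`,
hence `ζ(x*,y*) ≤ 2^{r/2}·h·|j|^{−r/2}`; in particular for any `ν ≥ 0`, if
`|j| > 2^{1+2ν/r}·h^{2/r}` then `ζ(x*,y*) < 2^{−ν}`, and if `|j| > 2·h^{2/r}` then
`ζ(x*,y*) < 1`. -/
theorem zetastar_small (r h : ℕ) (hr : 2 ≤ r) (hh : 1 ≤ h)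
    (α β γ δ j : ℂ) (hj : j = α * δ - β * γ) (hj0 : j ≠ 0) (hint : IntCoeffs α β γ δ r)
    (x y xs ys : ℤ)
    (hsol : IsPrimSol α β γ δ r h x y) (hsols : IsPrimSol α β γ δ r h xs ys)
    (hne : (xs, ys) ≠ (x, y) ∧ (xs, ys) ≠ (-x, -y))
    (hζ : zetaF α β γ δ r xs ys ≤ zetaF α β γ δ r x y) :
    ‖j‖ ≤ 2 * (h : ℝ) ^ ((2 : ℝ) / r) * zetaF α β γ δ r xs ys ^ (-(2 : ℝ) / r) ∧
    zetaF α β γ δ r xs ys ≤ (2 : ℝ) ^ ((r : ℝ) / 2) * (h : ℝ) * ‖j‖ ^ (-(r : ℝ) / 2) ∧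
    (∀ ν : ℝ, 0 ≤ ν →
      (2 : ℝ) ^ (1 + 2 * ν / r) * (h : ℝ) ^ ((2 : ℝ) / r) < ‖j‖ →
        zetaF α β γ δ r xs ys < (2 : ℝ) ^ (-ν)) ∧
    (2 * (h : ℝ) ^ ((2 : ℝ) / r) < ‖j‖ → zetaF α β γ δ r xs ys < 1) := by
  obtain ⟨hgcd, hFpos, hFle⟩ := hsol
  obtain ⟨hgcds, hFspos, hFsle⟩ := hsols
  have hrpos : (0:ℝ) < (r:ℝ) := by
    have : 0 < r := lt_of_lt_of_le (by norm_num) hr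
    exact_mod_cast this
  have hr0 : (r:ℝ) ≠ 0 := ne_of_gt hrpos
  have hrn0 : r ≠ 0 := by omega
  have hh1 : (1:ℝ) ≤ (h:ℝ) := by exact_mod_cast hh
  have hhpos : (0:ℝ) < (h:ℝ) := by linarith
  -- positivity of Zmax
  have hZpos : ∀ a b : ℤ, 0 < ‖form α β γ δ r a b‖ → 0 < Zmax α β γ δ a b := by
    intro a b hF
    have hform : form α β γ δ r a b ≠ 0 := by
      intro hF0; rw [hF0] at hF; simp at hF
    by_contra hc
    push_neg at hc
    have h1 : ‖lin α β a b‖ = 0 :=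
      le_antisymm (le_trans (le_max_left _ _) hc) (norm_nonneg _)
    have h2 : ‖lin γ δ a b‖ = 0 :=
      le_antisymm (le_trans (le_max_right _ _) hc) (norm_nonneg _)
    rw [norm_eq_zero] at h1 h2
    exact hform (by simp [form, h1, h2, zero_pow hrn0])
  have hZ : 0 < Zmax α β γ δ x y := hZpos x y hFpos
  have hZs : 0 < Zmax α β γ δ xs ys := hZpos xs ys hFspos
  set Z := Zmax α β γ δ x y
  set Zs := Zmax α β γ δ xs ys
  set ζ := zetaF α β γ δ r x y with hζdef
  set ζs := zetaF α β γ δ r xs ys with hζsdef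
  have hζs_pos : 0 < ζs := div_pos hFspos (pow_pos hZs r)
  have hζs0 : ζs ≠ 0 := ne_of_gt hζs_pos
  -- |j| ≤ 2 Z Zs
  have hjZ : ‖j‖ ≤ 2 * (Z * Zs) := by
    have key : j * ((x:ℂ) * (ys:ℂ) - (xs:ℂ) * (y:ℂ)) =
        lin α β x y * lin γ δ xs ys - lin α β xs ys * lin γ δ x y := by
      rw [hj]; simp only [lin]; ring
    have hn : x * ys - xs * y ≠ 0 := cross_ne_zero hgcd hgcds hne.1 hne.2
    have hcast : ((x:ℂ) * (ys:ℂ) - (xs:ℂ) * (y:ℂ)) = ((x * ys - xs * y : ℤ) : ℂ) := by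
      push_cast; ring
    have h1le : (1:ℝ) ≤ ‖(x:ℂ) * (ys:ℂ) - (xs:ℂ) * (y:ℂ)‖ := by
      rw [hcast, Complex.norm_intCast]
      exact_mod_cast Int.one_le_abs hn
    have habs : ‖j‖ * ‖(x:ℂ) * (ys:ℂ) - (xs:ℂ) * (y:ℂ)‖ ≤
        2 * (Z * Zs) := by
      rw [← norm_mul, key]
      calc ‖lin α β x y * lin γ δ xs ys - lin α β xs ys * lin γ δ x y‖
          ≤ ‖lin α β x y * lin γ δ xs ys‖ +
            ‖lin α β xs ys * lin γ δ x y‖ := by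
            exact le_trans (norm_sub_le _ _) (le_refl _)
        _ = ‖lin α β x y‖ * ‖lin γ δ xs ys‖ +
            ‖lin α β xs ys‖ * ‖lin γ δ x y‖ := by
            rw [norm_mul, norm_mul]
        _ ≤ Z * Zs + Zs * Z := by
            gcongr
            · exact le_max_left _ _
            · exact le_max_right _ _
            · exact le_max_left _ _
            · exact le_max_right _ _
        _ = 2 * (Z * Zs) := by ring
    calc ‖j‖ = ‖j‖ * 1 := by ring
      _ ≤ ‖j‖ * ‖(x:ℂ) * (ys:ℂ) - (xs:ℂ) * (y:ℂ)‖ := by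
          exact mul_le_mul_of_nonneg_left h1le (norm_nonneg _)
      _ ≤ 2 * (Z * Zs) := habs
  -- Z^r ≤ h/ζs, Zs^r ≤ h/ζs
  have hzeta : ζ * Z ^ r = ‖form α β γ δ r x y‖ := by
    rw [hζdef]; exact div_mul_cancel₀ _ (pow_ne_zero _ (ne_of_gt hZ))
  have hzetas : ζs * Zs ^ r = ‖form α β γ δ r xs ys‖ := by
    rw [hζsdef]; exact div_mul_cancel₀ _ (pow_ne_zero _ (ne_of_gt hZs))
  have hZle : Z ^ r ≤ (h:ℝ) / ζs := by
    rw [le_div_iff₀ hζs_pos]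
    calc Z ^ r * ζs ≤ Z ^ r * ζ := by
          exact mul_le_mul_of_nonneg_left hζ (pow_nonneg hZ.le r)
      _ = ζ * Z ^ r := by ring
      _ ≤ (h:ℝ) := by rw [hzeta]; exact hFle
  have hZsle : Zs ^ r ≤ (h:ℝ) / ζs := by
    rw [le_div_iff₀ hζs_pos]
    calc Zs ^ r * ζs = ζs * Zs ^ r := by ring
      _ ≤ (h:ℝ) := by rw [hzetas]; exact hFsle
  have hdivpos : (0:ℝ) < (h:ℝ) / ζs := div_pos hhpos hζs_pos
  -- Z * Zs ≤ (h/ζs)^(2/r)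
  set K := ((h:ℝ) / ζs) ^ ((2:ℝ) / r) with hKdef
  have hKpos : 0 < K := Real.rpow_pos_of_pos hdivpos _
  have hKr : K ^ r = ((h:ℝ) / ζs) ^ 2 := by
    rw [hKdef, ← Real.rpow_natCast (((h:ℝ) / ζs) ^ ((2:ℝ) / r)) r,
      ← Real.rpow_mul hdivpos.le, div_mul_cancel₀ _ hr0,
      show (2:ℝ) = ((2:ℕ):ℝ) by norm_num, Real.rpow_natCast]
  have hZZs : Z * Zs ≤ K := by
    have hpow : (Z * Zs) ^ r ≤ K ^ r := by
      rw [hKr, mul_pow]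
      calc Z ^ r * Zs ^ r ≤ ((h:ℝ)/ζs) * ((h:ℝ)/ζs) := by
            exact mul_le_mul hZle hZsle (pow_nonneg hZs.le r) hdivpos.le
        _ = ((h:ℝ)/ζs) ^ 2 := by ring
    exact le_of_pow_le_pow_left₀ hrn0 hKpos.le hpow
  -- main inequality 1
  have hKeq : K = (h:ℝ) ^ ((2:ℝ)/r) * ζs ^ (-(2:ℝ)/r) := by
    rw [hKdef, Real.div_rpow hhpos.le hζs_pos.le, neg_div, Real.rpow_neg hζs_pos.le,
      div_eq_mul_inv]
  have main1 : ‖j‖ ≤ 2 * (h:ℝ) ^ ((2:ℝ)/r) * ζs ^ (-(2:ℝ)/r) := by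
    calc ‖j‖ ≤ 2 * (Z * Zs) := hjZ
      _ ≤ 2 * K := by linarith
      _ = 2 * (h:ℝ) ^ ((2:ℝ)/r) * ζs ^ (-(2:ℝ)/r) := by rw [hKeq]; ring
  have hjpos : 0 < ‖j‖ := norm_pos_iff.mpr hj0
  -- main inequality 2
  have main2 : ζs ≤ (2:ℝ) ^ ((r:ℝ)/2) * (h:ℝ) * ‖j‖ ^ (-(r:ℝ)/2) := by
    have hstep : ‖j‖ ^ ((r:ℝ)/2) ≤ (2:ℝ) ^ ((r:ℝ)/2) * (h:ℝ) * ζs⁻¹ := by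
      have := Real.rpow_le_rpow (norm_nonneg j) main1
        (le_of_lt (by positivity : (0:ℝ) < (r:ℝ)/2))
      calc ‖j‖ ^ ((r:ℝ)/2)
          ≤ (2 * (h:ℝ) ^ ((2:ℝ)/r) * ζs ^ (-(2:ℝ)/r)) ^ ((r:ℝ)/2) := this
        _ = (2:ℝ) ^ ((r:ℝ)/2) * (h:ℝ) * ζs⁻¹ := by
            rw [Real.mul_rpow (by positivity) (Real.rpow_nonneg hζs_pos.le _),
              Real.mul_rpow (by norm_num) (Real.rpow_nonneg hhpos.le _),
              ← Real.rpow_mul hhpos.le, ← Real.rpow_mul hζs_pos.le]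
            rw [show (2:ℝ)/r * ((r:ℝ)/2) = 1 by field_simp <;> ring,
              show (-(2:ℝ)/r) * ((r:ℝ)/2) = -1 by field_simp <;> ring,
              Real.rpow_one, Real.rpow_neg_one]
    have hApow : 0 < ‖j‖ ^ ((r:ℝ)/2) := Real.rpow_pos_of_pos hjpos _
    have hmul : ζs * ‖j‖ ^ ((r:ℝ)/2) ≤ (2:ℝ) ^ ((r:ℝ)/2) * (h:ℝ) := by
      calc ζs * ‖j‖ ^ ((r:ℝ)/2)
          ≤ ζs * ((2:ℝ) ^ ((r:ℝ)/2) * (h:ℝ) * ζs⁻¹) := by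
            exact mul_le_mul_of_nonneg_left hstep hζs_pos.le
        _ = (2:ℝ) ^ ((r:ℝ)/2) * (h:ℝ) * (ζs * ζs⁻¹) := by ring
        _ = (2:ℝ) ^ ((r:ℝ)/2) * (h:ℝ) := by rw [mul_inv_cancel₀ hζs0, mul_one]
    rw [neg_div, Real.rpow_neg hjpos.le, ← div_eq_mul_inv]
    rw [le_div_iff₀ hApow]
    exact hmul
  -- main inequality 3
  have main3 : ∀ ν : ℝ, 0 ≤ ν →
      (2:ℝ) ^ (1 + 2 * ν / r) * (h:ℝ) ^ ((2:ℝ)/r) < ‖j‖ → ζs < (2:ℝ) ^ (-ν) := by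
    intro ν hν hgt
    have h2ν : (2:ℝ) ^ (1 + 2 * ν / r) = 2 * (2:ℝ) ^ (2 * ν / r) := by
      rw [Real.rpow_add (by norm_num), Real.rpow_one]
    have hlt : 2 * (2:ℝ) ^ (2 * ν / r) * (h:ℝ) ^ ((2:ℝ)/r) <
        2 * (h:ℝ) ^ ((2:ℝ)/r) * ζs ^ (-(2:ℝ)/r) := by
      rw [← h2ν]; exact lt_of_lt_of_le hgt main1
    have hhr : (0:ℝ) < 2 * (h:ℝ) ^ ((2:ℝ)/r) := by positivity
    have hlt2 : (2:ℝ) ^ (2 * ν / r) < ζs ^ (-(2:ℝ)/r) := by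
      have := hlt
      nlinarith [Real.rpow_pos_of_pos hhpos ((2:ℝ)/r), Real.rpow_pos_of_pos (by norm_num : (0:ℝ) < 2) (2 * ν / r), Real.rpow_pos_of_pos hζs_pos (-(2:ℝ)/r)]
    have hlt3 : (2:ℝ) ^ ν < ζs⁻¹ := by
      have := Real.rpow_lt_rpow (by positivity) hlt2 (by positivity : (0:ℝ) < (r:ℝ)/2)
      rwa [← Real.rpow_mul (by norm_num), ← Real.rpow_mul hζs_pos.le,
        show 2 * ν / r * ((r:ℝ)/2) = ν by field_simp <;> ring,
        show (-(2:ℝ)/r) * ((r:ℝ)/2) = -1 by field_simp <;> ring,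
        Real.rpow_neg_one] at this
    have : (ζs⁻¹)⁻¹ < ((2:ℝ) ^ ν)⁻¹ :=
      inv_strictAnti₀ (Real.rpow_pos_of_pos (by norm_num) ν) hlt3
    rwa [inv_inv, ← Real.rpow_neg (by norm_num)] at this
  refine ⟨main1, main2, main3, ?_⟩
  intro hgt
  have := main3 0 le_rfl (by
    rw [show 1 + 2 * (0:ℝ) / r = 1 by ring, Real.rpow_one]; exact hgt)
  rwa [neg_zero, Real.rpow_zero] at this
end
end

section
/- Assume γ is the complex conjugate of α and δ is the complex conjugate of β (so v(x,y) is the complex conjugate of u(x,y) for every (x,y) ∈ ℤ²; this is the case D < 0), and let r ≥ 3. Let (x',y') and (x,y) be primitive solutions of 0 < |F(x,y)| ≤ h, distinct up to sign, both related to the same r-th root of unity ω, with ζ(x,y) ≤ ζ(x',y'). Then Z(x,y) ≥ (|j|/(2h))·Z(x',y')^{r−1}. -/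
open Complex

noncomputable section

lemma aux_abs_one_sub_exp (φ : ℝ) :
    ‖1 - Complex.exp (φ * I)‖ = 2 * |Real.sin (φ / 2)| := by
  have hre : (1 - Complex.exp (φ * I)).re = 1 - Real.cos φ := by
    simp [Complex.exp_ofReal_mul_I_re]
  have him : (1 - Complex.exp (φ * I)).im = - Real.sin φ := by
    simp [Complex.exp_ofReal_mul_I_im]
  rw [Complex.norm_def, Complex.normSq_apply, hre, him]
  have key : (1 - Real.cos φ) * (1 - Real.cos φ) + (- Real.sin φ) * (- Real.sin φ)
      = (2 * |Real.sin (φ / 2)|) ^ 2 := by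
    have h1 : Real.cos (2 * (φ/2)) = 2 * Real.cos (φ/2) ^ 2 - 1 := Real.cos_two_mul _
    have h2 : Real.sin (φ/2) ^ 2 + Real.cos (φ/2) ^ 2 = 1 := Real.sin_sq_add_cos_sq _
    have h3 : Real.sin φ ^ 2 + Real.cos φ ^ 2 = 1 := Real.sin_sq_add_cos_sq _
    have h4 : |Real.sin (φ/2)| ^ 2 = Real.sin (φ/2) ^ 2 := sq_abs _
    have h5 : 2 * (φ/2) = φ := by ring
    rw [h5] at h1
    nlinarith [h1, h2, h3, h4]
  rw [key, Real.sqrt_sq (by positivity)]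

lemma aux_cross_ne (x y x' y' : ℤ) (hxy : Int.gcd x y = 1) (hxy' : Int.gcd x' y' = 1)
    (h1 : (x, y) ≠ (x', y')) (h2 : (x, y) ≠ (-x', -y')) : x * y' - x' * y ≠ 0 := by
  intro h
  have heq : x * y' = x' * y := by linarith
  have hc : IsCoprime x y := Int.isCoprime_iff_gcd_eq_one.mpr hxy
  have hc' : IsCoprime x' y' := Int.isCoprime_iff_gcd_eq_one.mpr hxy'
  have dx : x ∣ x' := hc.dvd_of_dvd_mul_right ⟨y', by linear_combination -heq⟩
  have dx' : x' ∣ x := hc'.dvd_of_dvd_mul_right ⟨y, by linear_combination heq⟩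
  have dy : y ∣ y' := (hc.symm).dvd_of_dvd_mul_right ⟨x', by linear_combination heq⟩
  have dy' : y' ∣ y := (hc'.symm).dvd_of_dvd_mul_right ⟨x, by linear_combination -heq⟩
  have hx : x' = x ∨ x' = -x := Int.associated_iff.mp (associated_of_dvd_dvd dx' dx)
  have hy : y' = y ∨ y' = -y := Int.associated_iff.mp (associated_of_dvd_dvd dy' dy)
  rcases hx with hx | hx <;> rcases hy with hy | hy
  · exact h1 (by rw [hx, hy])
  · -- x' = x, y' = -y : x*(-y) = x*y so x*y = 0
    rw [hx, hy] at heq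
    have hxy0 : x * y = 0 := by nlinarith [heq]
    rcases mul_eq_zero.mp hxy0 with h0 | h0
    · exact h2 (by rw [hx, hy, h0]; simp)
    · exact h1 (by rw [hx, hy, h0]; simp)
  · -- x' = -x, y' = y
    rw [hx, hy] at heq
    have hxy0 : x * y = 0 := by nlinarith [heq]
    rcases mul_eq_zero.mp hxy0 with h0 | h0
    · exact h1 (by rw [hx, hy, h0]; simp)
    · exact h2 (by rw [hx, hy, h0]; simp)
  · exact h2 (by rw [hx, hy]; simp)

lemma aux_lin_conj (α β : ℂ) (x y : ℤ) :
    lin ((starRingEnd ℂ) α) ((starRingEnd ℂ) β) x y = (starRingEnd ℂ) (lin α β x y) := by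
  simp [lin]

/-- Per-solution facts in the `D < 0` case. -/
lemma aux_per_sol (α β : ℂ) (r : ℕ) (hr : 3 ≤ r) (ω : ℂ) (hω : ω ^ r = 1) (hωa : ‖ω‖ = 1)
    (x y : ℤ)
    (h0 : 0 < ‖form α β ((starRingEnd ℂ) α) ((starRingEnd ℂ) β) r x y‖)
    (hrel : RelatedTo α β ((starRingEnd ℂ) α) ((starRingEnd ℂ) β) r ω x y) :
    ∃ t : ℝ, |t| ≤ Real.pi / r ∧
      lin α β x y ≠ 0 ∧
      Zmax α β ((starRingEnd ℂ) α) ((starRingEnd ℂ) β) x y = ‖lin α β x y‖ ∧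
      lin α β x y = lin ((starRingEnd ℂ) α) ((starRingEnd ℂ) β) x y * (ω * Complex.exp (t * I)) ∧
      (r : ℝ) * |t| ≤ Real.pi / 2 * zetaF α β ((starRingEnd ℂ) α) ((starRingEnd ℂ) β) r x y := by
  set u := lin α β x y with hu_def
  set v := lin ((starRingEnd ℂ) α) ((starRingEnd ℂ) β) x y with hv_def
  have hv : v = (starRingEnd ℂ) u := aux_lin_conj α β x y
  have hr0 : (0:ℝ) < r := by positivity
  have hu0 : u ≠ 0 := by
    intro h
    rw [show form α β ((starRingEnd ℂ) α) ((starRingEnd ℂ) β) r x y = u ^ r - v ^ r from rfl,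
      hv, h] at h0
    simp at h0
  have hv0 : v ≠ 0 := by rw [hv]; simpa using hu0
  have habs_uv : ‖v‖ = ‖u‖ := by rw [hv, Complex.norm_conj]
  have hZ : Zmax α β ((starRingEnd ℂ) α) ((starRingEnd ℂ) β) x y = ‖u‖ := by
    rw [show Zmax α β ((starRingEnd ℂ) α) ((starRingEnd ℂ) β) x y
        = max (‖u‖) (‖v‖) from rfl, habs_uv, max_self]
  set t := (u / v * ω⁻¹).arg with ht_def
  have ht_mem : t ∈ Set.Ioc (-(Real.pi / r)) (Real.pi / r) := hrel
  have ht_abs : |t| ≤ Real.pi / r := abs_le.mpr ⟨ht_mem.1.le, ht_mem.2⟩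
  have hω0 : ω ≠ 0 := by
    intro h; rw [h] at hω; simp [zero_pow (by omega : r ≠ 0)] at hω
  have habs1 : ‖u / v * ω⁻¹‖ = 1 := by
    rw [norm_mul, norm_div, habs_uv, norm_inv, hωa,
      div_self (norm_ne_zero_iff.mpr hu0)]
    norm_num
  have hexp : u / v * ω⁻¹ = Complex.exp (t * I) := by
    have := Complex.norm_mul_exp_arg_mul_I (u / v * ω⁻¹)
    rw [habs1] at this
    simpa using this.symm
  have huv : u = v * (ω * Complex.exp (t * I)) := by
    field_simp at hexp
    rw [hexp]; ring
  refine ⟨t, ht_abs, hu0, hZ, huv, ?_⟩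
  -- zeta computation
  have hwr : (ω * Complex.exp (t * I)) ^ r = Complex.exp ((r * t : ℝ) * I) := by
    rw [mul_pow, hω, one_mul, ← Complex.exp_nat_mul]
    push_cast; ring_nf
  have hvpow : v ^ r = u ^ r * Complex.exp (-(r * t : ℝ) * I) := by
    have : v = u * (ω * Complex.exp (t * I))⁻¹ := by
      rw [huv]; field_simp
    rw [this, mul_pow, inv_pow, hwr, ← Complex.exp_neg]
    push_cast; ring_nf
  have hform : form α β ((starRingEnd ℂ) α) ((starRingEnd ℂ) β) r x y
      = u ^ r * (1 - Complex.exp (-(r * t : ℝ) * I)) := by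
    rw [show form α β ((starRingEnd ℂ) α) ((starRingEnd ℂ) β) r x y = u ^ r - v ^ r from rfl,
      hvpow]; ring
  have hupow : ‖u‖ ^ r ≠ 0 := pow_ne_zero _ (norm_ne_zero_iff.mpr hu0)
  have hζ : zetaF α β ((starRingEnd ℂ) α) ((starRingEnd ℂ) β) r x y
      = 2 * |Real.sin (r * t / 2)| := by
    rw [zetaF, hZ, hform, norm_mul, norm_pow, mul_div_cancel_left₀ _ hupow,
      show -((r * t : ℝ) : ℂ) = ((-(r * t) : ℝ) : ℂ) by push_cast; ring,
      aux_abs_one_sub_exp]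
    rw [show (-(r * t : ℝ) / 2) = -(r * t / 2) by ring, Real.sin_neg, abs_neg]
  rw [hζ]
  -- now the sine bound
  have hrt : (r : ℝ) * |t| ≤ Real.pi := by
    calc (r : ℝ) * |t| ≤ (r : ℝ) * (Real.pi / r) := by
          exact mul_le_mul_of_nonneg_left ht_abs hr0.le
      _ = Real.pi := by field_simp
  have hs1 : 2 / Real.pi * ((r : ℝ) * |t| / 2) ≤ Real.sin ((r : ℝ) * |t| / 2) :=
    Real.mul_le_sin (by positivity) (by linarith)
  have hs2 : Real.sin ((r : ℝ) * |t| / 2) ≤ |Real.sin ((r : ℝ) * t / 2)| := by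
    rcases abs_cases t with ⟨h, _⟩ | ⟨h, _⟩
    · rw [h]; exact le_abs_self _
    · rw [h, show (r : ℝ) * -t / 2 = -((r:ℝ) * t / 2) by ring, Real.sin_neg]
      exact neg_le_abs _
  have h1' : (r : ℝ) * |t| ≤ Real.sin ((r : ℝ) * |t| / 2) * Real.pi := by
    rw [show 2 / Real.pi * ((r : ℝ) * |t| / 2) = ((r:ℝ) * |t|) / Real.pi by ring] at hs1
    exact (div_le_iff₀ Real.pi_pos).mp hs1
  nlinarith [mul_le_mul_of_nonneg_right hs2 Real.pi_pos.le]

/-- (Gap principle, case `D < 0`: `γ = conj α`, `δ = conj β`.) Let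
`r ≥ 3` and let `(x',y')`, `(x,y)` be primitive solutions of `0 < |F| ≤ h`, distinct up
to sign, both related to the same `r`-th root of unity `ω`, with `ζ(x,y) ≤ ζ(x',y')`.
Then `Z(x,y) ≥ (|j|/(2h))·Z(x',y')^{r−1}`. -/
theorem gap_principle_Dneg (r h : ℕ) (hr : 3 ≤ r) (hh : 1 ≤ h)
    (α β γ δ j : ℂ) (hγ : γ = (starRingEnd ℂ) α) (hδ : δ = (starRingEnd ℂ) β)
    (hj : j = α * δ - β * γ) (hj0 : j ≠ 0) (hint : IntCoeffs α β γ δ r)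
    (x' y' x y : ℤ)
    (hsol' : IsPrimSol α β γ δ r h x' y') (hsol : IsPrimSol α β γ δ r h x y)
    (hne : (x, y) ≠ (x', y') ∧ (x, y) ≠ (-x', -y'))
    (ω : ℂ) (hω : ω ^ r = 1)
    (hrel' : RelatedTo α β γ δ r ω x' y') (hrel : RelatedTo α β γ δ r ω x y)
    (hζ : zetaF α β γ δ r x y ≤ zetaF α β γ δ r x' y') :
    ‖j‖ / (2 * (h : ℝ)) * Zmax α β γ δ x' y' ^ (r - 1) ≤ Zmax α β γ δ x y := by
  subst hγ hδ hj
  obtain ⟨hg, hF0, hFh⟩ := hsol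
  obtain ⟨hg', hF0', hFh'⟩ := hsol'
  -- |ω| = 1
  have hωpow : ‖ω‖ ^ r = 1 := by rw [← norm_pow, hω, norm_one]
  have hωa : ‖ω‖ = 1 := by
    rcases lt_trichotomy (‖ω‖) 1 with hlt | heq | hgt
    · have := pow_lt_one₀ (norm_nonneg ω) hlt (by omega : r ≠ 0); linarith
    · exact heq
    · have := one_lt_pow₀ hgt (by omega : r ≠ 0); linarith
  obtain ⟨t, ht, hu0, hZeq, huv, hζb⟩ := aux_per_sol α β r hr ω hω hωa x y hF0 hrel
  obtain ⟨t', ht', hu0', hZeq', huv', hζb'⟩ := aux_per_sol α β r hr ω hω hωa x' y' hF0' hrel'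
  set U : ℂ := lin α β x y
  set V : ℂ := lin ((starRingEnd ℂ) α) ((starRingEnd ℂ) β) x y
  set U' : ℂ := lin α β x' y'
  set V' : ℂ := lin ((starRingEnd ℂ) α) ((starRingEnd ℂ) β) x' y'
  set Z : ℝ := ‖U‖
  set Z' : ℝ := ‖U'‖
  have hZpos : 0 < Z := norm_pos_iff.mpr hu0
  have hZ'pos : 0 < Z' := norm_pos_iff.mpr hu0'
  have hVabs : ‖V‖ = Z := by
    rw [show V = (starRingEnd ℂ) U from aux_lin_conj α β x y, Complex.norm_conj]
  have hV'abs : ‖V'‖ = Z' := by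
    rw [show V' = (starRingEnd ℂ) U' from aux_lin_conj α β x' y', Complex.norm_conj]
  set ζ : ℝ := zetaF α β ((starRingEnd ℂ) α) ((starRingEnd ℂ) β) r x y
  set ζ' : ℝ := zetaF α β ((starRingEnd ℂ) α) ((starRingEnd ℂ) β) r x' y'
  -- the cross determinant
  have hd : x * y' - x' * y ≠ 0 := aux_cross_ne x y x' y' hg hg' hne.1 hne.2
  have hcross : U * V' - U' * V
      = (α * (starRingEnd ℂ) β - β * (starRingEnd ℂ) α) * (((x * y' - x' * y : ℤ) : ℂ)) := by
    simp only [U, V, U', V', lin]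
    push_cast
    ring
  have hjlow : ‖α * (starRingEnd ℂ) β - β * (starRingEnd ℂ) α‖
      ≤ ‖U * V' - U' * V‖ := by
    rw [hcross, norm_mul]
    have h1 : (1 : ℝ) ≤ ‖((x * y' - x' * y : ℤ) : ℂ)‖ := by
      rw [Complex.norm_intCast]
      exact_mod_cast Int.one_le_abs hd
    nlinarith [norm_nonneg (α * (starRingEnd ℂ) β - β * (starRingEnd ℂ) α)]
  -- upper bound for the cross determinant
  have hfac : U * V' - U' * V = V * V' * ω * (Complex.exp (t * I) - Complex.exp (t' * I)) := by
    rw [huv, huv']; ring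
  have hdiff : ‖Complex.exp (t * I) - Complex.exp (t' * I)‖ ≤ |t' - t| := by
    have e1 : Complex.exp (t * I) - Complex.exp (t' * I)
        = Complex.exp (t * I) * (1 - Complex.exp (((t' - t : ℝ)) * I)) := by
      rw [mul_sub, mul_one, ← Complex.exp_add]
      congr 2
      push_cast; ring
    rw [e1, norm_mul, Complex.norm_exp_ofReal_mul_I, one_mul, aux_abs_one_sub_exp]
    have hsin := Real.abs_sin_le_abs (x := (t' - t) / 2)
    have hhalf : |(t' - t) / 2| = |t' - t| / 2 := by
      rw [abs_div, _root_.abs_two]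
    linarith
  have hD : ‖α * (starRingEnd ℂ) β - β * (starRingEnd ℂ) α‖
      ≤ Z * Z' * |t' - t| := by
    calc ‖α * (starRingEnd ℂ) β - β * (starRingEnd ℂ) α‖
        ≤ ‖U * V' - U' * V‖ := hjlow
      _ = Z * Z' * (‖Complex.exp (t * I) - Complex.exp (t' * I)‖) := by
          rw [hfac, norm_mul, norm_mul, norm_mul, hVabs, hV'abs, hωa, mul_one]
      _ ≤ Z * Z' * |t' - t| := by
          apply mul_le_mul_of_nonneg_left hdiff (by positivity)
  -- angle bound
  have hrD : (r : ℝ) * |t' - t| ≤ Real.pi * ζ' := by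
    have habs : |t' - t| ≤ |t'| + |t| := abs_sub _ _
    have h1 : (r : ℝ) * |t' - t| ≤ (r : ℝ) * (|t'| + |t|) :=
      mul_le_mul_of_nonneg_left habs (by positivity)
    have h2 : Real.pi / 2 * ζ ≤ Real.pi / 2 * ζ' :=
      mul_le_mul_of_nonneg_left hζ (by positivity)
    have h3 : (r : ℝ) * (|t'| + |t|) = (r : ℝ) * |t'| + (r : ℝ) * |t| := by ring
    linarith [hζb, hζb']
  -- zeta times Z'^r is at most h
  have hpow : Z' ^ r = Z' ^ (r - 1) * Z' := by
    rw [← pow_succ]; congr 1; omega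
  have hs3 : ζ' * Z' ^ r ≤ (h : ℝ) := by
    have : ζ' * Z' ^ r = ‖form α β ((starRingEnd ℂ) α) ((starRingEnd ℂ) β) r x' y'‖ := by
      rw [show ζ' = ‖form α β ((starRingEnd ℂ) α) ((starRingEnd ℂ) β) r x' y'‖
          / Zmax α β ((starRingEnd ℂ) α) ((starRingEnd ℂ) β) x' y' ^ r from rfl, hZeq']
      exact div_mul_cancel₀ _ (pow_ne_zero _ hZ'pos.ne')
    linarith [hFh']
  set P : ℝ := Z' ^ (r - 1)
  have hPpos : 0 < P := pow_pos hZ'pos _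
  have key : (r : ℝ) * (‖α * (starRingEnd ℂ) β - β * (starRingEnd ℂ) α‖ * P)
      ≤ Real.pi * ((h : ℝ) * Z) := by
    have s1 : (r : ℝ) * ‖α * (starRingEnd ℂ) β - β * (starRingEnd ℂ) α‖
        ≤ Z * Z' * (Real.pi * ζ') := by
      calc (r : ℝ) * ‖α * (starRingEnd ℂ) β - β * (starRingEnd ℂ) α‖
          ≤ (r : ℝ) * (Z * Z' * |t' - t|) := mul_le_mul_of_nonneg_left hD (by positivity)
        _ = Z * Z' * ((r : ℝ) * |t' - t|) := by ring
        _ ≤ Z * Z' * (Real.pi * ζ') := mul_le_mul_of_nonneg_left hrD (by positivity)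
    have s2 : (r : ℝ) * ‖α * (starRingEnd ℂ) β - β * (starRingEnd ℂ) α‖ * P
        ≤ Z * Z' * (Real.pi * ζ') * P := mul_le_mul_of_nonneg_right s1 hPpos.le
    have e2 : Z * Z' * (Real.pi * ζ') * P = (Real.pi * Z) * (ζ' * (P * Z')) := by ring
    have e3 : P * Z' = Z' ^ r := hpow.symm
    calc (r : ℝ) * (‖α * (starRingEnd ℂ) β - β * (starRingEnd ℂ) α‖ * P)
        = (r : ℝ) * ‖α * (starRingEnd ℂ) β - β * (starRingEnd ℂ) α‖ * P := by ring
      _ ≤ Z * Z' * (Real.pi * ζ') * P := s2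
      _ = (Real.pi * Z) * (ζ' * Z' ^ r) := by rw [e2, e3]
      _ ≤ (Real.pi * Z) * (h : ℝ) := by
          apply mul_le_mul_of_nonneg_left hs3 (by positivity)
      _ = Real.pi * ((h : ℝ) * Z) := by ring
  -- finish
  rw [hZeq, hZeq']
  rw [div_mul_eq_mul_div, div_le_iff₀ (by positivity : (0:ℝ) < 2 * (h : ℝ))]
  have hr3 : (3 : ℝ) ≤ (r : ℝ) := by exact_mod_cast hr
  have hjP : 0 ≤ ‖α * (starRingEnd ℂ) β - β * (starRingEnd ℂ) α‖ * P :=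
    mul_nonneg (norm_nonneg _) hPpos.le
  have h31 : (3 : ℝ) * (‖α * (starRingEnd ℂ) β - β * (starRingEnd ℂ) α‖ * P)
      ≤ (r : ℝ) * (‖α * (starRingEnd ℂ) β - β * (starRingEnd ℂ) α‖ * P) :=
    mul_le_mul_of_nonneg_right hr3 hjP
  have hpi4 : Real.pi ≤ 4 := Real.pi_le_four
  have hhZ : 0 ≤ (h : ℝ) * Z := mul_nonneg (by positivity) hZpos.le
  nlinarith [h31, key, hpi4, hhZ]
end
end

section
/- Let r ≥ 2 and assume |j| > 2·h^{2/r}. Let (x',y') and (x,y) be primitive solutions of 0 < |F(x,y)| ≤ h, distinct up to sign, both related to the same r-th root of unity ω, such that u(x',y'), v(x',y'), u(x,y), v(x,y) are nonzero and μ(x',y') and μ(x,y) are real (the case D > 0), and suppose ζ(x,y) ≤ ζ(x',y'). Then Z(x,y) ≥ (|j|/(2h))·Z(x',y')^{r−1}. -/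
open Complex

noncomputable section

/-- geometric sum bound -/
lemma real_key (s : ℝ) (hs : 0 ≤ s) (r : ℕ) (hr : 1 ≤ r) :
    |s - 1| * max s 1 ^ (r - 1) ≤ |s ^ r - 1| := by
  have hsum : (∑ i ∈ Finset.range r, s ^ i) * (s - 1) = s ^ r - 1 := geom_sum_mul s r
  have hsumnn : 0 ≤ ∑ i ∈ Finset.range r, s ^ i :=
    Finset.sum_nonneg fun i _ => pow_nonneg hs i
  have habs : |s ^ r - 1| = (∑ i ∈ Finset.range r, s ^ i) * |s - 1| := by
    rw [← hsum, abs_mul, _root_.abs_of_nonneg hsumnn]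
  rw [habs]
  have hmem : r - 1 ∈ Finset.range r := by simp; omega
  have hb : max s 1 ^ (r - 1) ≤ ∑ i ∈ Finset.range r, s ^ i := by
    rcases le_total s 1 with h | h
    · have : max s 1 = 1 := max_eq_right h
      rw [this, one_pow]
      calc (1:ℝ) = s ^ 0 := by simp
        _ ≤ ∑ i ∈ Finset.range r, s ^ i := by
            refine Finset.single_le_sum (fun i _ => pow_nonneg hs i) ?_
            simp; omega
    · have : max s 1 = s := max_eq_left h
      rw [this]
      exact Finset.single_le_sum (fun i _ => pow_nonneg hs i) hmem
  calc |s - 1| * max s 1 ^ (r - 1) ≤ |s - 1| * ∑ i ∈ Finset.range r, s ^ i := by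
        exact mul_le_mul_of_nonneg_left hb (abs_nonneg _)
    _ = (∑ i ∈ Finset.range r, s ^ i) * |s - 1| := by ring

/-- Lemma B: the good-case estimate. -/
lemma lemB {r : ℕ} (hr : 1 ≤ r) {u v ω : ℂ} {s : ℝ} (hs : 0 < s)
    (huv : u = (s : ℂ) * ω * v) (hωr : ω ^ r = 1) :
    ‖u - ω * v‖ * max (‖u‖) (‖v‖) ^ (r - 1)
      ≤ ‖u ^ r - v ^ r‖ := by
  have hωabs : ‖ω‖ = 1 := by
    have := Complex.norm_eq_one_of_pow_eq_one hωr (by omega)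
    simpa using this
  have h1 : u - ω * v = ((s : ℂ) - 1) * (ω * v) := by rw [huv]; ring
  have h2 : u ^ r - v ^ r = ((s : ℂ) ^ r - 1) * v ^ r := by
    rw [huv, mul_pow, mul_pow, hωr]; ring
  have habsu : ‖u‖ = s * ‖v‖ := by
    rw [huv]; simp [hωabs, abs_of_pos hs]
  rw [h1, h2, norm_mul, norm_mul, norm_mul, norm_pow, hωabs, habsu]
  have e1 : ‖(s : ℂ) - 1‖ = |s - 1| := by
    rw [show ((s:ℂ) - 1) = ((s - 1 : ℝ) : ℂ) by push_cast; ring, Complex.norm_real, Real.norm_eq_abs]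
  have e2 : ‖(s : ℂ) ^ r - 1‖ = |s ^ r - 1| := by
    rw [show ((s:ℂ)^r - 1) = ((s ^ r - 1 : ℝ) : ℂ) by push_cast; ring, Complex.norm_real, Real.norm_eq_abs]
  rw [e1, e2]
  have hvnn : 0 ≤ ‖v‖ := norm_nonneg v
  have hmax : max (s * ‖v‖) (‖v‖) = max s 1 * ‖v‖ := by
    rw [max_mul_of_nonneg _ _ hvnn, one_mul]
  rw [hmax, mul_pow]
  calc |s - 1| * (1 * ‖v‖) * (max s 1 ^ (r-1) * ‖v‖ ^ (r-1))
      = (|s - 1| * max s 1 ^ (r-1)) * (‖v‖ * ‖v‖ ^ (r-1)) := by ring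
    _ ≤ |s ^ r - 1| * (‖v‖ * ‖v‖ ^ (r-1)) := by
        apply mul_le_mul_of_nonneg_right (real_key s hs.le r hr)
        positivity
    _ = |s ^ r - 1| * ‖v‖ ^ r := by
        rw [← pow_succ']
        congr 2
        omega

/-- Lemma A: related + μ real + small form value forces `u = s·ω·v` with `s > 0`. -/
lemma lemA {r : ℕ} (hr : 1 ≤ r) {u v ω : ℂ} (hu : u ≠ 0) (hv : v ≠ 0) (hωr : ω ^ r = 1)
    (hμ : (v ^ r / u ^ r).im = 0)
    (harg : (u / v * ω⁻¹).arg ∈ Set.Ioc (-(Real.pi / r)) (Real.pi / r))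
    (hF : ‖u ^ r - v ^ r‖ < max (‖u‖) (‖v‖) ^ r) :
    ∃ s : ℝ, 0 < s ∧ u = (s : ℂ) * ω * v := by
  have hω0 : ω ≠ 0 := by
    intro h0; rw [h0] at hωr; simp [zero_pow (by omega : r ≠ 0)] at hωr
  have hωabs : ‖ω‖ = 1 := by
    have := Complex.norm_eq_one_of_pow_eq_one hωr (by omega)
    simpa using this
  set w : ℂ := u / v * ω⁻¹ with hwdef
  have hw0 : w ≠ 0 := by
    apply mul_ne_zero (div_ne_zero hu hv) (inv_ne_zero hω0)
  have hwr : w ^ r = u ^ r / v ^ r := by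
    rw [hwdef, mul_pow, div_pow, inv_pow, hωr, inv_one, mul_one]
  have hwim : (w ^ r).im = 0 := by
    rw [hwr, show u ^ r / v ^ r = (v ^ r / u ^ r)⁻¹ by rw [inv_div]]
    rw [Complex.inv_im, hμ]; simp
  set θ : ℝ := w.arg with hθdef
  have hwexp : (‖w‖ : ℂ) * Complex.exp (θ * I) = w := Complex.norm_mul_exp_arg_mul_I w
  have hawpos : 0 < ‖w‖ := norm_pos_iff.mpr hw0
  have hwrexp : w ^ r = ((‖w‖ ^ r : ℝ) : ℂ) * Complex.exp (((r : ℝ) * θ : ℝ) * I) := by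
    conv_lhs => rw [← hwexp]
    rw [mul_pow, ← Complex.exp_nat_mul]
    push_cast
    ring_nf
  have hsin : Real.sin ((r : ℝ) * θ) = 0 := by
    have : (w ^ r).im = ‖w‖ ^ r * Real.sin ((r : ℝ) * θ) := by
      rw [hwrexp, Complex.mul_im, Complex.ofReal_re, Complex.ofReal_im,
        Complex.exp_ofReal_mul_I_im]
      simp
    rw [this] at hwim
    rcases mul_eq_zero.mp hwim with h | h
    · exact absurd h (by positivity)
    · exact h
  have hrpos : (0:ℝ) < r := by positivity
  have hθub : θ ≤ Real.pi / r := harg.2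
  have hθlb : -(Real.pi / r) < θ := harg.1
  have hrcanc : (r:ℝ) * (Real.pi / r) = Real.pi := by
    rw [mul_comm]; exact div_mul_cancel₀ _ (ne_of_gt hrpos)
  have hub : (r : ℝ) * θ ≤ Real.pi := by
    have h1 : (r:ℝ) * θ ≤ (r:ℝ) * (Real.pi / r) := by nlinarith
    linarith
  have hlb : -Real.pi < (r : ℝ) * θ := by
    have h1 : (r:ℝ) * (-(Real.pi / r)) < (r:ℝ) * θ := (mul_lt_mul_iff_right₀ hrpos).mpr hθlb
    have h2 : (r:ℝ) * (-(Real.pi / r)) = -Real.pi := by rw [mul_neg, hrcanc]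
    linarith
  by_cases hcase : (r : ℝ) * θ = Real.pi
  · -- bad case: contradiction with hF
    exfalso
    have hwrneg : w ^ r = -((‖w‖ ^ r : ℝ) : ℂ) := by
      rw [hwrexp, hcase]
      rw [show ((Real.pi : ℝ) : ℂ) * I = Real.pi * I by norm_num, Complex.exp_pi_mul_I]
      ring
    have hur : u ^ r = -((‖w‖ ^ r : ℝ) : ℂ) * v ^ r := by
      rw [← hwrneg, hwr]; field_simp
    have hvpos0 : 0 < ‖v‖ := norm_pos_iff.mpr hv
    have habsuv : ‖u‖ = ‖w‖ * ‖v‖ := by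
      rw [hwdef, norm_mul, norm_div, norm_inv, hωabs, inv_one, mul_one,
        div_mul_cancel₀ _ (ne_of_gt hvpos0)]
    have hFval : ‖u ^ r - v ^ r‖ = (‖w‖ ^ r + 1) * ‖v‖ ^ r := by
      rw [hur, show -((‖w‖ ^ r : ℝ) : ℂ) * v ^ r - v ^ r
            = -(((‖w‖ ^ r + 1 : ℝ)) : ℂ) * v ^ r by push_cast; ring]
      rw [norm_mul, norm_neg, Complex.norm_real, Real.norm_eq_abs, norm_pow]
      rw [abs_of_pos (by positivity)]
    have hmaxle : max (‖u‖) (‖v‖) ^ r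
        ≤ (‖w‖ ^ r + 1) * ‖v‖ ^ r := by
      rw [habsuv]
      have hvpos : 0 < ‖v‖ := hvpos0
      rcases le_total (‖w‖) 1 with h1 | h1
      · rw [max_eq_right (by nlinarith)]
        nlinarith [pow_pos hvpos r, pow_nonneg (norm_nonneg w) r]
      · rw [max_eq_left (by nlinarith), mul_pow]
        nlinarith [pow_pos hvpos r, pow_nonneg (norm_nonneg w) r]
    rw [hFval] at hF
    linarith
  · -- good case
    have hθ0 : θ = 0 := by
      have hlt : (r : ℝ) * θ < Real.pi := lt_of_le_of_ne hub hcase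
      have h0 := (Real.sin_eq_zero_iff_of_lt_of_lt hlb hlt).mp hsin
      exact (mul_eq_zero.mp h0).resolve_left (ne_of_gt hrpos)
    refine ⟨‖w‖, hawpos, ?_⟩
    have hwreal : w = ((‖w‖ : ℝ) : ℂ) := by
      conv_lhs => rw [← hwexp]
      rw [hθ0]
      simp
    calc u = w * ω * v := by rw [hwdef]; field_simp
      _ = ((‖w‖ : ℝ) : ℂ) * ω * v := congrArg (fun z => z * ω * v) hwreal

/-- Distinct primitive pairs have nonzero cross determinant. -/
lemma prim_cross {x y x' y' : ℤ} (h : Int.gcd x y = 1) (h' : Int.gcd x' y' = 1)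
    (h1 : (x, y) ≠ (x', y')) (h2 : (x, y) ≠ (-x', -y')) : x * y' - x' * y ≠ 0 := by
  intro he
  have e : x * y' = x' * y := by omega
  have cxy : IsCoprime x y := Int.isCoprime_iff_gcd_eq_one.mpr h
  have cxy' : IsCoprime x' y' := Int.isCoprime_iff_gcd_eq_one.mpr h'
  have dx : x ∣ x' := cxy.dvd_of_dvd_mul_right (by rw [← e]; exact dvd_mul_right x y')
  have dx' : x' ∣ x := cxy'.dvd_of_dvd_mul_right (by rw [e]; exact dvd_mul_right x' y)
  have dy : y ∣ y' := cxy.symm.dvd_of_dvd_mul_right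
    (by rw [mul_comm, e]; exact dvd_mul_left y x')
  have dy' : y' ∣ y := cxy'.symm.dvd_of_dvd_mul_right
    (by rw [mul_comm, ← e]; exact dvd_mul_left y' x)
  have hx := Int.associated_iff.mp (associated_of_dvd_dvd dx dx')
  have hy := Int.associated_iff.mp (associated_of_dvd_dvd dy dy')
  have hg : x = 0 → y = 1 ∨ y = -1 := by
    intro h0; rw [h0] at h; simp [Int.gcd] at h; omega
  have hg2 : y = 0 → x = 1 ∨ x = -1 := by
    intro h0; rw [h0] at h; simp [Int.gcd] at h; omega
  rcases hx with hxx | hxx <;> rcases hy with hyy | hyy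
  · exact h1 (by rw [hxx, hyy])
  · -- x = x', y = -y'
    have : x = 0 ∨ y' = 0 := by
      have h2 : 2 * (x * y') = 0 := by linear_combination e + y' * hxx + x' * hyy
      have h3 : x * y' = 0 := by linarith
      rcases mul_eq_zero.mp h3 with h|h
      · left; exact h
      · right; exact h
    rcases this with h0 | h0
    · apply h2; rw [hxx, hyy]
      have : x' = 0 := by omega
      rw [Prod.mk.injEq]; constructor <;> omega
    · apply h1
      have : y = 0 := by omega
      rw [Prod.mk.injEq]; constructor <;> omega
  · -- x = -x', y = y'
    have : x' = 0 ∨ y = 0 := by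
      have h2 : 2 * (x' * y) = 0 := by linear_combination (-1) * e + y' * hxx + x' * hyy
      have h3 : x' * y = 0 := by linarith
      rcases mul_eq_zero.mp h3 with h|h
      · left; exact h
      · right; exact h
    rcases this with h0 | h0
    · apply h1
      rw [Prod.mk.injEq]; constructor <;> omega
    · apply h2
      have : y' = 0 := by omega
      rw [Prod.mk.injEq]; constructor <;> omega
  · exact h2 (by rw [hxx, hyy, Prod.mk.injEq]; constructor <;> ring)

/-- (Gap principle, case `D > 0`: `μ` real.) Let `r ≥ 2`, assume
`|j| > 2·h^{2/r}`, and let `(x',y')`, `(x,y)` be primitive solutions of `0 < |F| ≤ h`,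
distinct up to sign, both related to the same `r`-th root of unity `ω`, with `u, v`
nonzero and `μ` real at both solutions, and `ζ(x,y) ≤ ζ(x',y')`. Then
`Z(x,y) ≥ (|j|/(2h))·Z(x',y')^{r−1}`. -/
theorem gap_principle_Dpos (r h : ℕ) (hr : 2 ≤ r) (hh : 1 ≤ h)
    (α β γ δ j : ℂ) (hj : j = α * δ - β * γ) (hj0 : j ≠ 0) (hint : IntCoeffs α β γ δ r)
    (hjbig : 2 * (h : ℝ) ^ ((2 : ℝ) / r) < ‖j‖)
    (x' y' x y : ℤ)
    (hsol' : IsPrimSol α β γ δ r h x' y') (hsol : IsPrimSol α β γ δ r h x y)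
    (hne : (x, y) ≠ (x', y') ∧ (x, y) ≠ (-x', -y'))
    (hu' : lin α β x' y' ≠ 0) (hv' : lin γ δ x' y' ≠ 0)
    (hu : lin α β x y ≠ 0) (hv : lin γ δ x y ≠ 0)
    (hμ' : (muF α β γ δ r x' y').im = 0) (hμ : (muF α β γ δ r x y).im = 0)
    (ω : ℂ) (hω : ω ^ r = 1)
    (hrel' : RelatedTo α β γ δ r ω x' y') (hrel : RelatedTo α β γ δ r ω x y)
    (hζ : zetaF α β γ δ r x y ≤ zetaF α β γ δ r x' y') :
    ‖j‖ / (2 * (h : ℝ)) * Zmax α β γ δ x' y' ^ (r - 1) ≤ Zmax α β γ δ x y := by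
  obtain ⟨hgcd, hFpos, hFle⟩ := hsol
  obtain ⟨hgcd', hF'pos, hF'le⟩ := hsol'
  have hr1 : 1 ≤ r := by omega
  have hh1 : (1:ℝ) ≤ (h:ℝ) := by exact_mod_cast hh
  have hhpos : (0:ℝ) < (h:ℝ) := by linarith
  simp only [zetaF] at hζ
  set Fa := ‖form α β γ δ r x y‖ with hFadef
  set Fa' := ‖form α β γ δ r x' y'‖ with hFa'def
  set Z := Zmax α β γ δ x y with hZdef
  set Z' := Zmax α β γ δ x' y' with hZ'def
  have hZeq : Z = max (‖lin α β x y‖) (‖lin γ δ x y‖) := rfl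
  have hZ'eq : Z' = max (‖lin α β x' y'‖) (‖lin γ δ x' y'‖) := rfl
  have hZpos : 0 < Z := by
    rw [hZeq]; exact lt_of_lt_of_le (norm_pos_iff.mpr hu) (le_max_left _ _)
  have hZ'pos : 0 < Z' := by
    rw [hZ'eq]; exact lt_of_lt_of_le (norm_pos_iff.mpr hu') (le_max_left _ _)
  have hule : ‖lin α β x y‖ ≤ Z := by rw [hZeq]; exact le_max_left _ _
  have hvle : ‖lin γ δ x y‖ ≤ Z := by rw [hZeq]; exact le_max_right _ _
  have hu'le : ‖lin α β x' y'‖ ≤ Z' := by rw [hZ'eq]; exact le_max_left _ _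
  have hv'le : ‖lin γ δ x' y'‖ ≤ Z' := by rw [hZ'eq]; exact le_max_right _ _
  -- cross determinant
  have hd : x * y' - x' * y ≠ 0 := prim_cross hgcd hgcd' hne.1 hne.2
  have hcross : lin α β x y * lin γ δ x' y' - lin γ δ x y * lin α β x' y'
      = j * ((x * y' - x' * y : ℤ) : ℂ) := by
    rw [hj]; simp only [lin]; push_cast; ring
  have hjle : ‖j‖
      ≤ ‖lin α β x y * lin γ δ x' y' - lin γ δ x y * lin α β x' y'‖ := by
    rw [hcross, norm_mul, Complex.norm_intCast]
    have h1 : (1:ℝ) ≤ |((x * y' - x' * y : ℤ) : ℝ)| := by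
      have := Int.one_le_abs hd
      exact_mod_cast this
    nlinarith [norm_nonneg j]
  -- reduce goal
  rw [div_mul_eq_mul_div, div_le_iff₀ (by positivity : (0:ℝ) < 2 * (h:ℝ))]
  set m := r - 1 with hmdef
  have hm' : r = m + 1 := by omega
  rcases le_or_gt (Z' ^ r) (h:ℝ) with hcase | hcase
  · -- small Z' case
    have htri : ‖lin α β x y * lin γ δ x' y' - lin γ δ x y * lin α β x' y'‖
        ≤ 2 * Z * Z' := by
      calc ‖lin α β x y * lin γ δ x' y' - lin γ δ x y * lin α β x' y'‖
          ≤ ‖lin α β x y * lin γ δ x' y'‖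
            + ‖lin γ δ x y * lin α β x' y'‖ := norm_sub_le _ _
        _ = ‖lin α β x y‖ * ‖lin γ δ x' y'‖
            + ‖lin γ δ x y‖ * ‖lin α β x' y'‖ := by
            rw [norm_mul, norm_mul]
        _ ≤ Z * Z' + Z * Z' := add_le_add
            (mul_le_mul hule hv'le (norm_nonneg _) hZpos.le)
            (mul_le_mul hvle hu'le (norm_nonneg _) hZpos.le)
        _ = 2 * Z * Z' := by ring
    have hpow : Z' * Z' ^ m = Z' ^ r := by rw [hm', pow_succ]; ring
    calc ‖j‖ * Z' ^ m ≤ (2 * Z * Z') * Z' ^ m :=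
          mul_le_mul_of_nonneg_right (hjle.trans htri) (by positivity)
      _ = 2 * Z * (Z' * Z' ^ m) := by ring
      _ = 2 * Z * Z' ^ r := by rw [hpow]
      _ ≤ 2 * Z * (h:ℝ) := by nlinarith
      _ = Z * (2 * (h:ℝ)) := by ring
  · -- main case
    have hF'lt : Fa' < Z' ^ r := lt_of_le_of_lt hF'le hcase
    have hzz : Fa * Z' ^ r ≤ Fa' * Z ^ r :=
      (div_le_div_iff₀ (pow_pos hZpos r) (pow_pos hZ'pos r)).mp hζ
    have hFlt : Fa < Z ^ r := by
      nlinarith [pow_pos hZ'pos r, pow_pos hZpos r]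
    obtain ⟨s, hs, hus⟩ := lemA hr1 hu hv hω hμ hrel hFlt
    obtain ⟨s', hs', hus'⟩ := lemA hr1 hu' hv' hω hμ' hrel' hF'lt
    have hA : ‖lin α β x y - ω * lin γ δ x y‖ * Z ^ m ≤ Fa :=
      lemB hr1 hs hus hω
    have hA' : ‖lin α β x' y' - ω * lin γ δ x' y'‖ * Z' ^ m ≤ Fa' :=
      lemB hr1 hs' hus' hω
    set A := ‖lin α β x y - ω * lin γ δ x y‖ with hAdef
    set A' := ‖lin α β x' y' - ω * lin γ δ x' y'‖ with hA'def
    have hAnn : 0 ≤ A := norm_nonneg _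
    have hA'nn : 0 ≤ A' := norm_nonneg _
    have hsplit : lin α β x y * lin γ δ x' y' - lin γ δ x y * lin α β x' y'
        = lin γ δ x' y' * (lin α β x y - ω * lin γ δ x y)
          - lin γ δ x y * (lin α β x' y' - ω * lin γ δ x' y') := by ring
    have htri : ‖lin α β x y * lin γ δ x' y' - lin γ δ x y * lin α β x' y'‖
        ≤ Z' * A + Z * A' := by
      rw [hsplit]
      calc ‖lin γ δ x' y' * (lin α β x y - ω * lin γ δ x y)
              - lin γ δ x y * (lin α β x' y' - ω * lin γ δ x' y')‖
          ≤ ‖lin γ δ x' y' * (lin α β x y - ω * lin γ δ x y)‖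
            + ‖lin γ δ x y * (lin α β x' y' - ω * lin γ δ x' y')‖ :=
            norm_sub_le _ _
        _ = ‖lin γ δ x' y'‖ * A + ‖lin γ δ x y‖ * A' := by
            rw [norm_mul, norm_mul]
        _ ≤ Z' * A + Z * A' := add_le_add
            (mul_le_mul_of_nonneg_right hv'le hAnn)
            (mul_le_mul_of_nonneg_right hvle hA'nn)
    have hjle2 : ‖j‖ ≤ Z' * A + Z * A' := hjle.trans htri
    have hZm : 0 < Z ^ m := pow_pos hZpos m
    have hkey : ‖j‖ * Z' ^ m * Z ^ m ≤ Z * (2 * (h:ℝ)) * Z ^ m := by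
      have h1 : Z' * Z' ^ m * Fa = Fa * Z' ^ r := by rw [hm', pow_succ]; ring
      have h2 : Z * Z ^ m * Fa' = Fa' * Z ^ r := by rw [hm', pow_succ]; ring
      calc ‖j‖ * Z' ^ m * Z ^ m ≤ (Z' * A + Z * A') * Z' ^ m * Z ^ m := by
            apply mul_le_mul_of_nonneg_right _ hZm.le
            exact mul_le_mul_of_nonneg_right hjle2 (by positivity)
        _ = Z' * Z' ^ m * (A * Z ^ m) + Z * Z ^ m * (A' * Z' ^ m) := by ring
        _ ≤ Z' * Z' ^ m * Fa + Z * Z ^ m * Fa' := add_le_add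
            (mul_le_mul_of_nonneg_left hA (by positivity))
            (mul_le_mul_of_nonneg_left hA' (by positivity))
        _ ≤ Z * Z ^ m * Fa' + Z * Z ^ m * Fa' := by linarith
        _ = 2 * (Z * Z ^ m) * Fa' := by ring
        _ ≤ 2 * (Z * Z ^ m) * (h:ℝ) := mul_le_mul_of_nonneg_left hF'le (by positivity)
        _ = Z * (2 * (h:ℝ)) * Z ^ m := by ring
    exact le_of_mul_le_mul_right hkey hZm
end
end

section
/- Let r ≥ 7 and suppose |j|^{r(r−1)} / (2^{r²−r}·h^{2r−2}) ≥ r^{13r²(r−1)/(r²−5r−2)}·h^{4(r−1)(r²−r+2)/(r²−5r−2)}. If D > 0 and F is definite (i.e., either F(x,y) > 0 for all real (x,y) ≠ (0,0), or F(x,y) < 0 for all real (x,y) ≠ (0,0)), then N_F(h) ≤ 1. -/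
open Complex

noncomputable section

lemma prim_det {x₁ y₁ x₂ y₂ : ℤ} (h₁ : Int.gcd x₁ y₁ = 1) (h₂ : Int.gcd x₂ y₂ = 1)
    (hd : x₁ * y₂ - x₂ * y₁ = 0) : (x₂ = x₁ ∧ y₂ = y₁) ∨ (x₂ = -x₁ ∧ y₂ = -y₁) := by
  obtain ⟨m, n, hmn⟩ := Int.isCoprime_iff_gcd_eq_one.mpr h₁
  set k := m * x₂ + n * y₂ with hk
  have hx : x₂ = k * x₁ := by linear_combination (-x₂) * hmn - n * hd
  have hy : y₂ = k * y₁ := by linear_combination (-y₂) * hmn + m * hd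
  have h3 : k.natAbs * Int.gcd x₁ y₁ = 1 := by
    rw [← Int.gcd_mul_left, ← hx, ← hy]; exact h₂
  rw [h₁, mul_one] at h3
  have hk1 : k = 1 ∨ k = -1 := by
    rcases Int.natAbs_eq k with he | he <;> rw [he, h3] <;> simp
  rcases hk1 with he | he <;> rw [he] at hx hy <;> [left; right] <;>
    constructor <;> omega

set_option maxHeartbeats 2000000 in
/-- **= Main theorem, case `D > 0`, `F` definite.** Let `r ≥ 7` and suppose
`|j|^{r(r−1)}/(2^{r²−r}·h^{2r−2}) ≥ r^{13r²(r−1)/(r²−5r−2)}·h^{4(r−1)(r²−r+2)/(r²−5r−2)}`.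
If `D = B² − 4AC > 0` and `F` is definite, then the number of primitive solutions of
`0 < |F| ≤ h`, counted up to sign, is at most `1`. -/
theorem main_theorem_Dpos_definite (r h : ℕ) (hr : 7 ≤ r) (hh : 1 ≤ h)
    (α β γ δ j χ : ℂ) (A B C : ℤ)
    (hj : j = α * δ - β * γ) (hj0 : j ≠ 0) (hint : IntCoeffs α β γ δ r)
    (hχ : ∃ q : ℚ, (q : ℂ) = χ ^ r)
    (hfact : ∀ x y : ℂ, (α * x + β * y) * (γ * x + δ * y) =
      χ * ((A : ℂ) * x ^ 2 + (B : ℂ) * x * y + (C : ℂ) * y ^ 2))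
    (hD : 0 < B ^ 2 - 4 * A * C)
    (hdef : (∀ x y : ℝ, (x, y) ≠ (0, 0) → ∃ a : ℝ, 0 < a ∧
        (a : ℂ) = (α * x + β * y) ^ r - (γ * x + δ * y) ^ r) ∨
      (∀ x y : ℝ, (x, y) ≠ (0, 0) → ∃ a : ℝ, a < 0 ∧
        (a : ℂ) = (α * x + β * y) ^ r - (γ * x + δ * y) ^ r))
    (hΔ : (r : ℝ) ^ (13 * (r : ℝ) ^ 2 * ((r : ℝ) - 1) / ((r : ℝ) ^ 2 - 5 * r - 2)) *
        (h : ℝ) ^ (4 * ((r : ℝ) - 1) * ((r : ℝ) ^ 2 - r + 2) / ((r : ℝ) ^ 2 - 5 * r - 2))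
      ≤ ‖j‖ ^ (r * (r - 1)) / ((2 : ℝ) ^ (r ^ 2 - r) * (h : ℝ) ^ (2 * r - 2))) :
    ∃ T : Finset (ℤ × ℤ), T.card ≤ 1 ∧
      ∀ p : ℤ × ℤ, IsPrimSol α β γ δ r h p.1 p.2 → p ∈ T ∨ (-p.1, -p.2) ∈ T := by
  classical
  have hr0 : r ≠ 0 := by omega
  -- unified sign
  obtain ⟨σ, hσ, hσdef⟩ : ∃ σ : ℝ, (σ = 1 ∨ σ = -1) ∧ ∀ x y : ℝ, (x, y) ≠ (0, 0) →
      ∃ a : ℝ, 0 < σ * a ∧ (a : ℂ) = (α * x + β * y) ^ r - (γ * x + δ * y) ^ r := by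
    rcases hdef with H | H
    · exact ⟨1, Or.inl rfl, fun x y hxy => by
        obtain ⟨a, ha, he⟩ := H x y hxy; exact ⟨a, by linarith, he⟩⟩
    · exact ⟨-1, Or.inr rfl, fun x y hxy => by
        obtain ⟨a, ha, he⟩ := H x y hxy; exact ⟨a, by linarith, he⟩⟩
  -- r is even
  have hreven : Even r := by
    by_contra hodd
    rw [Nat.not_even_iff_odd] at hodd
    obtain ⟨a₁, ha₁, he₁⟩ := hσdef 1 0 (by norm_num)
    obtain ⟨a₂, ha₂, he₂⟩ := hσdef (-1) 0 (by norm_num)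
    have hkey : (a₂ : ℂ) = -(a₁ : ℂ) := by
      rw [he₂, he₁]
      push_cast
      rw [show α * (-1) + β * 0 = -(α * 1 + β * 0) from by ring,
        show γ * (-1) + δ * 0 = -(γ * 1 + δ * 0) from by ring,
        hodd.neg_pow, hodd.neg_pow]
      ring
    have ha : a₂ = -a₁ := by exact_mod_cast hkey
    rw [ha] at ha₂
    have := mul_neg σ a₁
    linarith
  -- structure
  obtain ⟨lam, mu, a, b, c, d, hα, hβ, hγ, hδ⟩ :
      ∃ (lam mu : ℂ) (a b c d : ℝ), α = lam * (a : ℂ) ∧ β = lam * (b : ℂ) ∧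
        γ = mu * (c : ℂ) ∧ δ = mu * (d : ℂ) := by
    have hzero : ∀ s t : ℝ, (A : ℝ) * s ^ 2 + B * s * t + C * t ^ 2 = 0 →
        α * (s : ℂ) + β * (t : ℂ) = 0 ∨ γ * (s : ℂ) + δ * (t : ℂ) = 0 := by
      intro s t hst
      have h0 : (α * (s : ℂ) + β * (t : ℂ)) * (γ * (s : ℂ) + δ * (t : ℂ)) = 0 := by
        rw [hfact (s : ℂ) (t : ℂ)]
        have hc : (A : ℂ) * (s:ℂ) ^ 2 + (B : ℂ) * (s:ℂ) * (t:ℂ) + (C : ℂ) * (t:ℂ) ^ 2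
            = (((A : ℝ) * s ^ 2 + B * s * t + C * t ^ 2 : ℝ) : ℂ) := by push_cast; ring
        rw [hc, hst]; simp
      exact mul_eq_zero.mp h0
    by_cases hA : A = 0
    · have hB : B ≠ 0 := by intro h0; rw [hA, h0] at hD; norm_num at hD
      have hBc : (B : ℂ) ≠ 0 := Int.cast_ne_zero.mpr hB
      have h1 := hzero 1 0 (by rw [hA]; push_cast; ring)
      have h2 := hzero (-C) B (by rw [hA]; push_cast; ring)
      simp only [Complex.ofReal_one, Complex.ofReal_zero, mul_one, mul_zero, add_zero] at h1
      push_cast at h2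
      rcases h1 with h1 | h1 <;> rcases h2 with h2 | h2
      · exfalso; apply hj0
        have hb0 : β = 0 := by
          rw [h1] at h2; simp at h2; exact h2.resolve_right hB
        rw [hj, h1, hb0]; ring
      · refine ⟨β, γ, 0, 1, 1, (C : ℝ) / (B : ℝ), by push_cast; simpa using h1, by push_cast; ring, by push_cast; ring, ?_⟩
        have hBr : ((B:ℤ):ℝ) ≠ 0 := Int.cast_ne_zero.mpr hB
        push_cast
        field_simp
        linear_combination h2
      · refine ⟨α, δ, 1, (C : ℝ) / (B : ℝ), 0, 1, by push_cast; ring, ?_, by push_cast; simpa using h1, by push_cast; ring⟩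
        have hBr : ((B:ℤ):ℝ) ≠ 0 := Int.cast_ne_zero.mpr hB
        push_cast
        field_simp
        linear_combination h2
      · exfalso; apply hj0
        have hd0 : δ = 0 := by
          rw [h1] at h2; simp at h2; exact h2.resolve_right hB
        rw [hj, h1, hd0]; ring
    · have hA' : (A : ℝ) ≠ 0 := Int.cast_ne_zero.mpr hA
      have hD' : (0:ℝ) < (B:ℝ) ^ 2 - 4 * A * C := by exact_mod_cast hD
      set e := Real.sqrt ((B:ℝ) ^ 2 - 4 * A * C) with hedef
      have he : e ^ 2 = (B:ℝ) ^ 2 - 4 * A * C := Real.sq_sqrt hD'.le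
      have hepos : 0 < e := Real.sqrt_pos.mpr hD'
      set t₁ := (-B + e) / (2 * A) with ht1def
      set t₂ := (-B - e) / (2 * A) with ht2def
      have ht₁ : (A : ℝ) * t₁ ^ 2 + B * t₁ * 1 + C * 1 ^ 2 = 0 := by
        rw [ht1def]; field_simp; nlinarith [he]
      have ht₂ : (A : ℝ) * t₂ ^ 2 + B * t₂ * 1 + C * 1 ^ 2 = 0 := by
        rw [ht2def]; field_simp; nlinarith [he]
      have ht12 : t₁ ≠ t₂ := by
        rw [ht1def, ht2def]
        intro hcon
        rw [div_eq_div_iff (by simpa using hA') (by simpa using hA')] at hcon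
        have h5 := mul_right_cancel₀ (mul_ne_zero two_ne_zero hA') hcon
        linarith
      have h1 := hzero t₁ 1 ht₁
      have h2 := hzero t₂ 1 ht₂
      simp only [Complex.ofReal_one, mul_one] at h1 h2
      have ht12c : (t₁ : ℂ) ≠ (t₂ : ℂ) := by exact_mod_cast ht12
      rcases h1 with h1 | h1 <;> rcases h2 with h2 | h2
      · exfalso; apply hj0
        have ha0 : α = 0 := by
          have h3 : α * ((t₁ : ℂ) - t₂) = 0 := by linear_combination h1 - h2
          rcases mul_eq_zero.mp h3 with h | h
          · exact h
          · exact absurd (sub_eq_zero.mp h) ht12c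
        have hb0 : β = 0 := by rw [ha0] at h1; simpa using h1
        rw [hj, ha0, hb0]; ring
      · exact ⟨α, γ, 1, -t₁, 1, -t₂, by push_cast; ring, by push_cast; linear_combination h1,
          by push_cast; ring, by push_cast; linear_combination h2⟩
      · exact ⟨α, γ, 1, -t₂, 1, -t₁, by push_cast; ring, by push_cast; linear_combination h2,
          by push_cast; ring, by push_cast; linear_combination h1⟩
      · exfalso; apply hj0
        have hc0 : γ = 0 := by
          have h3 : γ * ((t₁ : ℂ) - t₂) = 0 := by linear_combination h1 - h2
          rcases mul_eq_zero.mp h3 with h | h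
          · exact h
          · exact absurd (sub_eq_zero.mp h) ht12c
        have hd0 : δ = 0 := by rw [hc0] at h1; simpa using h1
        rw [hj, hc0, hd0]; ring
  set E := a * d - b * c with hEdef
  have hcd : ¬ (c = 0 ∧ d = 0) := by
    rintro ⟨hc0, hd0⟩
    apply hj0
    rw [hj, hγ, hδ, hc0, hd0]; push_cast; ring
  have hdc : ((d:ℝ), -c) ≠ ((0:ℝ), (0:ℝ)) := by
    intro hcon
    rw [Prod.mk.injEq] at hcon
    exact hcd ⟨neg_eq_zero.mp hcon.2, hcon.1⟩
  obtain ⟨a₁, ha₁, he₁⟩ := hσdef d (-c) hdc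
  have e1 : α * (d:ℂ) + β * ((-c : ℝ) : ℂ) = lam * ((E : ℝ) : ℂ) := by
    rw [hα, hβ, hEdef]; push_cast; ring
  have e2 : γ * (d:ℂ) + δ * ((-c : ℝ) : ℂ) = 0 := by
    rw [hγ, hδ]; push_cast; ring
  rw [e1, e2, zero_pow hr0, sub_zero, mul_pow] at he₁
  have hE0 : E ≠ 0 := by
    intro h0
    rw [h0] at he₁
    simp only [Complex.ofReal_zero, zero_pow hr0, mul_zero, Complex.ofReal_eq_zero] at he₁
    rw [he₁, mul_zero] at ha₁; exact lt_irrefl 0 ha₁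
  have hErpos : 0 < E ^ r := hreven.pow_pos hE0
  have hEc : ((E:ℝ):ℂ) ^ r ≠ 0 := pow_ne_zero r (by exact_mod_cast hE0)
  set L := a₁ / E ^ r with hLdef
  have hLeq : (L:ℂ) = lam ^ r := by
    rw [hLdef]; push_cast
    rw [he₁]
    exact mul_div_cancel_right₀ _ hEc
  have hLpos : 0 < σ * L := by
    have h1 : 0 < (σ * a₁) / E ^ r := div_pos ha₁ hErpos
    have h2 : σ * L = σ * a₁ / E ^ r := by rw [hLdef, mul_div_assoc]
    rw [h2]; exact h1
  have hab : ¬ (a = 0 ∧ b = 0) := by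
    rintro ⟨h1, h2⟩
    apply hj0
    rw [hj, hα, hβ, h1, h2]; push_cast; ring
  have hba : ((b:ℝ), -a) ≠ ((0:ℝ), (0:ℝ)) := by
    intro hcon
    rw [Prod.mk.injEq] at hcon
    exact hab ⟨neg_eq_zero.mp hcon.2, hcon.1⟩
  obtain ⟨a₂, ha₂, he₂⟩ := hσdef b (-a) hba
  have e3 : α * (b:ℂ) + β * ((-a : ℝ) : ℂ) = 0 := by
    rw [hα, hβ]; push_cast; ring
  have e4 : γ * (b:ℂ) + δ * ((-a : ℝ) : ℂ) = mu * (-((E : ℝ) : ℂ)) := by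
    rw [hγ, hδ, hEdef]; push_cast; ring
  rw [e3, e4, zero_pow hr0, mul_pow, zero_sub, (hreven.neg_pow ((E:ℝ):ℂ))] at he₂
  set M := -a₂ / E ^ r with hMdef
  have hMeq : (M:ℂ) = mu ^ r := by
    rw [hMdef]; push_cast
    rw [he₂, neg_neg]
    exact mul_div_cancel_right₀ _ hEc
  have hMneg : σ * M < 0 := by
    have h1 : 0 < (σ * a₂) / E ^ r := div_pos ha₂ hErpos
    have h2 : σ * M = -((σ * a₂) / E ^ r) := by rw [hMdef]; ring
    rw [h2]; linarith
  have hlamabs : ‖lam‖ ^ r = |L| := by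
    rw [← norm_pow, ← hLeq, Complex.norm_real, Real.norm_eq_abs]
  have hmuabs : ‖mu‖ ^ r = |M| := by
    rw [← norm_pow, ← hMeq, Complex.norm_real, Real.norm_eq_abs]
  have hLabs : |L| = σ * L := by
    rcases hσ with h1 | h1 <;> rw [h1] at hLpos ⊢
    · rw [abs_of_pos (by linarith)]; ring
    · rw [abs_of_neg (by linarith)]; ring
  have hMabs : |M| = -(σ * M) := by
    rcases hσ with h1 | h1 <;> rw [h1] at hMneg ⊢
    · rw [abs_of_neg (by linarith)]; ring
    · rw [abs_of_pos (by linarith)]; ring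
  have key : ∀ x y : ℤ, ‖form α β γ δ r x y‖ ≤ (h:ℝ) →
      ‖lin α β x y‖ ^ r ≤ (h:ℝ) ∧ ‖lin γ δ x y‖ ^ r ≤ (h:ℝ) := by
    intro x y hF
    have hu : lin α β x y = lam * ((a * x + b * y : ℝ) : ℂ) := by
      unfold lin; rw [hα, hβ]; push_cast; ring
    have hv : lin γ δ x y = mu * ((c * x + d * y : ℝ) : ℂ) := by
      unfold lin; rw [hγ, hδ]; push_cast; ring
    set s : ℝ := a * x + b * y with hsdef
    set t : ℝ := c * x + d * y with htdef
    have hsr : 0 ≤ s ^ r := hreven.pow_nonneg s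
    have htr : 0 ≤ t ^ r := hreven.pow_nonneg t
    have hFeq : form α β γ δ r x y = ((L * s ^ r - M * t ^ r : ℝ) : ℂ) := by
      unfold form; rw [hu, hv, mul_pow, mul_pow, ← hLeq, ← hMeq]; push_cast; ring
    have habs : ‖form α β γ δ r x y‖ = σ * L * s ^ r + (-(σ * M)) * t ^ r := by
      rw [hFeq, Complex.norm_real, Real.norm_eq_abs]
      rcases hσ with h1 | h1 <;> rw [h1] at hLpos hMneg ⊢
      · have hge : 0 ≤ L * s ^ r - M * t ^ r := by nlinarith
        rw [_root_.abs_of_nonneg hge]; ring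
      · have hle : L * s ^ r - M * t ^ r ≤ 0 := by nlinarith
        rw [_root_.abs_of_nonpos hle]; ring
    rw [habs] at hF
    have hm1 : 0 ≤ (-(σ * M)) * t ^ r := mul_nonneg (by linarith) htr
    have hm2 : 0 ≤ σ * L * s ^ r := mul_nonneg (by linarith) hsr
    constructor
    · have h4 : ‖lin α β x y‖ ^ r = σ * L * s ^ r := by
        rw [hu, norm_mul, mul_pow, hlamabs, Complex.norm_real, Real.norm_eq_abs, ← _root_.abs_pow,
          _root_.abs_of_nonneg hsr, hLabs]
      rw [h4]; linarith
    · have h4 : ‖lin γ δ x y‖ ^ r = (-(σ * M)) * t ^ r := by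
        rw [hv, norm_mul, mul_pow, hmuabs, Complex.norm_real, Real.norm_eq_abs, ← _root_.abs_pow,
          _root_.abs_of_nonneg htr, hMabs]
      rw [h4]; linarith
  by_cases hex : ∃ p : ℤ × ℤ, IsPrimSol α β γ δ r h p.1 p.2
  · obtain ⟨p, hp⟩ := hex
    refine ⟨{p}, by simp, ?_⟩
    intro q hq
    simp only [Finset.mem_singleton]
    by_contra hcon
    push_neg at hcon
    obtain ⟨hne1, hne2⟩ := hcon
    have hdet : p.1 * q.2 - q.1 * p.2 ≠ 0 := by
      intro h0
      rcases prim_det hp.1 hq.1 h0 with ⟨h1, h2⟩ | ⟨h1, h2⟩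
      · exact hne1 (Prod.ext_iff.mpr ⟨h1, h2⟩)
      · exact hne2 (Prod.ext_iff.mpr ⟨show -q.1 = p.1 by omega, show -q.2 = p.2 by omega⟩)
    obtain ⟨hup, hvp⟩ := key p.1 p.2 hp.2.2
    obtain ⟨huq, hvq⟩ := key q.1 q.2 hq.2.2
    set Up := ‖lin α β p.1 p.2‖ with hUp
    set Vp := ‖lin γ δ p.1 p.2‖ with hVp
    set Uq := ‖lin α β q.1 q.2‖ with hUq
    set Vq := ‖lin γ δ q.1 q.2‖ with hVq
    have hUp0 : 0 ≤ Up := norm_nonneg _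
    have hVp0 : 0 ≤ Vp := norm_nonneg _
    have hUq0 : 0 ≤ Uq := norm_nonneg _
    have hVq0 : 0 ≤ Vq := norm_nonneg _
    have hh0 : (0:ℝ) ≤ (h:ℝ) := Nat.cast_nonneg h
    have hid : lin α β p.1 p.2 * lin γ δ q.1 q.2 - lin α β q.1 q.2 * lin γ δ p.1 p.2
        = j * ((p.1 * q.2 - q.1 * p.2 : ℤ) : ℂ) := by
      unfold lin; rw [hj]; push_cast; ring
    have h1le : (1:ℝ) ≤ ‖(((p.1 * q.2 - q.1 * p.2 : ℤ) : ℂ))‖ := by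
      rw [Complex.norm_intCast, ← Int.cast_abs]
      exact_mod_cast Int.one_le_abs hdet
    have hjle : ‖j‖ ≤ Up * Vq + Uq * Vp := by
      have h2 : ‖j‖ * ‖(((p.1 * q.2 - q.1 * p.2 : ℤ) : ℂ))‖
          ≤ Up * Vq + Uq * Vp := by
        rw [← norm_mul, ← hid]
        calc ‖(lin α β p.1 p.2 * lin γ δ q.1 q.2
                - lin α β q.1 q.2 * lin γ δ p.1 p.2)‖
            ≤ ‖(lin α β p.1 p.2 * lin γ δ q.1 q.2)‖
              + ‖(lin α β q.1 q.2 * lin γ δ p.1 p.2)‖ :=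
              norm_sub_le _ _
          _ = Up * Vq + Uq * Vp := by rw [norm_mul, norm_mul]
      have h3 := mul_le_mul_of_nonneg_left h1le (norm_nonneg j)
      rw [mul_one] at h3
      linarith
    have hprod1 : (Up * Vq) ^ r ≤ (h:ℝ) ^ 2 := by
      rw [mul_pow, pow_two]
      exact mul_le_mul hup hvq (pow_nonneg hVq0 r) hh0
    have hprod2 : (Uq * Vp) ^ r ≤ (h:ℝ) ^ 2 := by
      rw [mul_pow, pow_two]
      exact mul_le_mul huq hvp (pow_nonneg hVp0 r) hh0
    have hjr : ‖j‖ ^ r ≤ 2 ^ r * (h:ℝ) ^ 2 := by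
      have hm : ‖j‖ ≤ 2 * max (Up * Vq) (Uq * Vp) := by
        rcases le_total (Up * Vq) (Uq * Vp) with hle | hle
        · rw [max_eq_right hle]; linarith
        · rw [max_eq_left hle]; linarith
      have h4 : ‖j‖ ^ r ≤ (2 * max (Up * Vq) (Uq * Vp)) ^ r :=
        pow_le_pow_left₀ (norm_nonneg j) hm r
      rw [mul_pow] at h4
      have h5 : max (Up * Vq) (Uq * Vp) ^ r ≤ (h:ℝ) ^ 2 := by
        rcases max_cases (Up * Vq) (Uq * Vp) with ⟨heq, _⟩ | ⟨heq, _⟩ <;> rw [heq]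
        · exact hprod1
        · exact hprod2
      calc ‖j‖ ^ r ≤ 2 ^ r * max (Up * Vq) (Uq * Vp) ^ r := h4
        _ ≤ 2 ^ r * (h:ℝ) ^ 2 := by
            have := mul_le_mul_of_nonneg_left h5 (le_of_lt (pow_pos (zero_lt_two) r))
            linarith [this]
    have e5 : r * (r - 1) = r ^ 2 - r := by
      obtain ⟨n, rfl⟩ : ∃ n, r = n + 1 := ⟨r - 1, by omega⟩
      have ha' : (n + 1) * (n + 1) = (n + 1) * n + (n + 1) := by ring
      have hb' : (n + 1) ^ 2 = (n + 1) * (n + 1) := pow_two _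
      simp only [Nat.add_sub_cancel]
      omega
    have e6 : 2 * (r - 1) = 2 * r - 2 := by omega
    have hP : (0:ℝ) < 2 ^ (r ^ 2 - r) * (h:ℝ) ^ (2 * r - 2) := by positivity
    have hΔ2 := (le_div_iff₀ hP).mp hΔ
    have hjrr : ‖j‖ ^ (r * (r - 1)) ≤ 2 ^ (r ^ 2 - r) * (h:ℝ) ^ (2 * r - 2) := by
      have h6 : ‖j‖ ^ (r * (r - 1)) = (‖j‖ ^ r) ^ (r - 1) := by
        rw [← pow_mul]
      have h7 : (‖j‖ ^ r) ^ (r - 1) ≤ ((2:ℝ) ^ r * (h:ℝ) ^ 2) ^ (r - 1) :=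
        pow_le_pow_left₀ (pow_nonneg (norm_nonneg j) r) hjr (r - 1)
      have h8 : ((2:ℝ) ^ r * (h:ℝ) ^ 2) ^ (r - 1) = 2 ^ (r ^ 2 - r) * (h:ℝ) ^ (2 * r - 2) := by
        rw [mul_pow, ← pow_mul, ← pow_mul, e5, e6]
      rw [h6, ← h8]; exact h7
    have hone : (1:ℝ) < (r : ℝ) ^ (13 * (r : ℝ) ^ 2 * ((r : ℝ) - 1) / ((r : ℝ) ^ 2 - 5 * r - 2)) *
        (h : ℝ) ^ (4 * ((r : ℝ) - 1) * ((r : ℝ) ^ 2 - r + 2) / ((r : ℝ) ^ 2 - 5 * r - 2)) := by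
      have hr7 : (7:ℝ) ≤ (r:ℝ) := by exact_mod_cast hr
      have hh1 : (1:ℝ) ≤ (h:ℝ) := by exact_mod_cast hh
      have hden : (0:ℝ) < (r:ℝ) ^ 2 - 5 * r - 2 := by nlinarith
      have hE1 : 0 < 13 * (r:ℝ) ^ 2 * ((r:ℝ) - 1) / ((r:ℝ) ^ 2 - 5 * r - 2) :=
        div_pos (by nlinarith) hden
      have h9 : 1 < (r : ℝ) ^ (13 * (r : ℝ) ^ 2 * ((r : ℝ) - 1) / ((r : ℝ) ^ 2 - 5 * r - 2)) :=
        (Real.one_lt_rpow_iff_of_pos (by linarith)).mpr (Or.inl ⟨by linarith, hE1⟩)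
      have h10 : 1 ≤ (h : ℝ) ^ (4 * ((r : ℝ) - 1) * ((r : ℝ) ^ 2 - r + 2) / ((r : ℝ) ^ 2 - 5 * r - 2)) :=
        Real.one_le_rpow hh1 (div_nonneg (by nlinarith) hden.le)
      have h11 := mul_le_mul_of_nonneg_left h10 (le_of_lt (lt_trans one_pos h9))
      rw [mul_one] at h11
      linarith
    nlinarith [hΔ2, hjrr, hone, hP]
  · exact ⟨∅, by simp, fun p hp' => absurd ⟨p, hp'⟩ hex⟩
end
end
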